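/- arXiv:1806.01064 — 4 statements merged into one kernel-verified Lean document; each statement's English description precedes it below -/
import Mathlib

section
/- Let G be a finite simple graph, let k be a positive integer, and let S = {x_1, x_2, …, x_k} be a set of k pairwise distinct vertices of G such that the induced subgraph G − S has an equitable k-coloring. If |N_G(x_i) \ S| ≤ k − i for every i with 1 ≤ i ≤ k (where N_G(x_i) is the set of neighbors of x_i in G), then G has an equitable k-coloring. -/
lemma greedy_list (k : ℕ) (F : ℕ → Finset (Fin k))
    (hF : ∀ i < k, (F i).card ≤ k - (i + 1)) :
    ∀ n ≤ k, ∃ l : List (Fin k), l.length = n ∧ l.Nodup ∧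
      ∀ i < n, ∀ y, l[i]? = some y → y ∉ F i := by
  intro n
  induction n with
  | zero => intro _; exact ⟨[], rfl, List.nodup_nil, by simp⟩
  | succ n ih =>
    intro hn
    obtain ⟨l, hlen, hnd, hget⟩ := ih (by omega)
    have hTcard : (l.toFinset ∪ F n).card < k := by
      have h1 : l.toFinset.card ≤ n := by
        simpa [hlen] using List.toFinset_card_le l
      have h2 := hF n (by omega)
      calc (l.toFinset ∪ F n).card ≤ l.toFinset.card + (F n).card :=
            Finset.card_union_le _ _
        _ ≤ n + (k - (n+1)) := by omega
        _ < k := by omega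
    have hne : (Finset.univ \ (l.toFinset ∪ F n)).Nonempty := by
      rw [← Finset.card_pos, Finset.card_sdiff_of_subset (Finset.subset_univ _)]
      simp only [Finset.card_univ, Fintype.card_fin]
      omega
    obtain ⟨a, ha⟩ := hne
    rw [Finset.mem_sdiff, Finset.mem_union] at ha
    push_neg at ha
    refine ⟨l ++ [a], by simp [hlen], ?_, ?_⟩
    · rw [List.nodup_append]
      refine ⟨hnd, List.nodup_singleton a, ?_⟩
      intro b hb b' hb' hbb'
      simp at hb'
      subst hb'
      subst hbb'
      exact ha.2.1 (List.mem_toFinset.2 hb)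
    · intro i hi y hy
      rcases lt_or_eq_of_le (Nat.lt_succ_iff.mp hi) with h | h
      · rw [List.getElem?_append_left (by omega)] at hy
        exact hget i h y hy
      · subst h
        rw [List.getElem?_append_right (by omega)] at hy
        simp [hlen] at hy
        subst hy
        exact ha.2.2

lemma greedy_inj (k : ℕ) (F : Fin k → Finset (Fin k))
    (hF : ∀ i, (F i).card ≤ k - (i.val + 1)) :
    ∃ σ : Fin k → Fin k, Function.Bijective σ ∧ ∀ i, σ i ∉ F i := by
  obtain ⟨l, hlen, hnd, hget⟩ := greedy_list k
    (fun i => if h : i < k then F ⟨i, h⟩ else ∅)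
    (fun i hi => by simp [hi, hF ⟨i, hi⟩]) k le_rfl
  refine ⟨fun i => l.get ⟨i.val, by omega⟩, ?_, ?_⟩
  · rw [Fintype.bijective_iff_injective_and_card]
    refine ⟨fun i j hij => ?_, rfl⟩
    have := List.nodup_iff_injective_get.mp hnd hij
    have h2 := congrArg Fin.val this
    exact Fin.ext h2
  · intro i
    have hq : l[i.val]? = some (l.get ⟨i.val, by omega⟩) :=
      List.getElem?_eq_getElem (by omega)
    have := hget i.val (by omega) _ hq
    simpa [i.isLt] using this

/-- Let `S = {x 0, …, x (k-1)}` be a set of `k` distinct vertices of a finite simple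
graph `G` such that `G − S` has an equitable `k`-coloring. If
`|N_G(x_i) \ S| ≤ k − i` for every `i` with `1 ≤ i ≤ k` (here `x i` with `i : Fin k`
plays the role of `x_{i+1}`, so the bound is `k - (i+1)`), then `G` has an equitable
`k`-coloring. -/
theorem equitable_coloring_extension {V : Type*} [Fintype V] [DecidableEq V]
    (G : SimpleGraph V) [DecidableRel G.Adj] (k : ℕ) (hk : 0 < k)
    (x : Fin k → V) (hx : Function.Injective x)
    (S : Finset V) (hS : S = Finset.univ.image x)
    (hnbr : ∀ i : Fin k, ((G.neighborFinset (x i)) \ S).card ≤ k - (i.val + 1))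
    (hGS : ∃ c : {v : V // v ∉ S} → Fin k,
      (∀ u v : {v : V // v ∉ S}, G.Adj u.val v.val → c u ≠ c v) ∧
      ∀ i j : Fin k,
        (Finset.univ.filter fun v => c v = i).card ≤
          (Finset.univ.filter fun v => c v = j).card + 1) :
    ∃ c : V → Fin k,
      (∀ u v : V, G.Adj u v → c u ≠ c v) ∧
      ∀ i j : Fin k,
        (Finset.univ.filter fun v => c v = i).card ≤
          (Finset.univ.filter fun v => c v = j).card + 1 := by
  obtain ⟨c, hc, hceq⟩ := hGS
  -- forbidden color sets
  set F : Fin k → Finset (Fin k) := fun i =>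
    ((G.neighborFinset (x i)) \ S).attach.image
      (fun v => c ⟨v.1, (Finset.mem_sdiff.mp v.2).2⟩) with hF
  have hFcard : ∀ i, (F i).card ≤ k - (i.val + 1) := by
    intro i
    calc (F i).card ≤ ((G.neighborFinset (x i)) \ S).attach.card :=
          Finset.card_image_le
      _ = ((G.neighborFinset (x i)) \ S).card := Finset.card_attach
      _ ≤ k - (i.val + 1) := hnbr i
  obtain ⟨σ, hσbij, hσF⟩ := greedy_inj k F hFcard
  have hexu : ∀ v ∈ S, ∃! i, x i = v := by
    intro v hv
    rw [hS, Finset.mem_image] at hv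
    obtain ⟨i, _, hi⟩ := hv
    exact ⟨i, hi, fun j hj => hx (hj.trans hi.symm)⟩
  set c' : V → Fin k := fun v =>
    if h : v ∈ S then σ (Fintype.choose (fun i => x i = v) (hexu v h))
    else c ⟨v, h⟩ with hc'
  have hxS : ∀ i, x i ∈ S := by
    intro i; rw [hS]; exact Finset.mem_image_of_mem x (Finset.mem_univ i)
  have hc'S : ∀ i, c' (x i) = σ i := by
    intro i
    have h := hxS i
    have h2 : x (Fintype.choose (fun j => x j = x i) (hexu _ h)) = x i :=
      Fintype.choose_spec (fun j => x j = x i) (hexu _ h)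
    simp only [hc', dif_pos h, hx h2]
  have hc'notS : ∀ v (h : v ∉ S), c' v = c ⟨v, h⟩ := by
    intro v h; simp only [hc', dif_neg h]
  -- membership of colored outside neighbors in F
  have hmemF : ∀ (i : Fin k) (v : V) (hv : v ∉ S), G.Adj (x i) v → c ⟨v, hv⟩ ∈ F i := by
    intro i v hv hadj
    have hvm : v ∈ (G.neighborFinset (x i)) \ S := by
      rw [Finset.mem_sdiff, SimpleGraph.mem_neighborFinset]
      exact ⟨hadj, hv⟩
    rw [hF]
    exact Finset.mem_image.2 ⟨⟨v, hvm⟩, Finset.mem_attach _ _, rfl⟩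
  -- idx of a vertex in S
  have hidxeq : ∀ v (h : v ∈ S),
      c' v = σ (Fintype.choose (fun i => x i = v) (hexu v h)) := by
    intro v h; simp only [hc', dif_pos h]
  have hidxspec : ∀ v (h : v ∈ S),
      x (Fintype.choose (fun i => x i = v) (hexu v h)) = v := by
    intro v h; exact Fintype.choose_spec (fun i => x i = v) (hexu v h)
  refine ⟨c', ?_, ?_⟩
  · -- properness
    intro u v huv heq
    by_cases hu : u ∈ S <;> by_cases hv : v ∈ S
    · set i := Fintype.choose (fun j => x j = u) (hexu u hu)
      set j := Fintype.choose (fun j => x j = v) (hexu v hv)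
      rw [hidxeq u hu, hidxeq v hv] at heq
      have : i = j := hσbij.1 heq
      have huv' : u = v := by
        rw [← hidxspec u hu, ← hidxspec v hv]
        exact congrArg x this
      exact G.ne_of_adj huv huv'
    · set i := Fintype.choose (fun j => x j = u) (hexu u hu)
      rw [hidxeq u hu, hc'notS v hv] at heq
      have hadj : G.Adj (x i) v := by rw [hidxspec u hu]; exact huv
      exact hσF i (heq ▸ hmemF i v hv hadj)
    · set j := Fintype.choose (fun j => x j = v) (hexu v hv)
      rw [hidxeq v hv, hc'notS u hu] at heq
      have hadj : G.Adj (x j) u := by rw [hidxspec v hv]; exact huv.symm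
      exact hσF j (heq.symm ▸ hmemF j u hu hadj)
    · exact hc ⟨u, hu⟩ ⟨v, hv⟩ huv (by rwa [← hc'notS u hu, ← hc'notS v hv])
  · -- equitability
    have hcount : ∀ m : Fin k,
        (Finset.univ.filter fun v => c' v = m).card =
          (Finset.univ.filter fun w : {v : V // v ∉ S} => c w = m).card + 1 := by
      intro m
      have hsplit : (Finset.univ.filter fun v => c' v = m) =
          (S.filter fun v => c' v = m) ∪
            ((Finset.univ \ S).filter fun v => c' v = m) := by
        rw [← Finset.filter_union, Finset.union_sdiff_of_subset (Finset.subset_univ S)]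
      have hdisj : Disjoint (S.filter fun v => c' v = m)
          ((Finset.univ \ S).filter fun v => c' v = m) :=
        Finset.disjoint_filter_filter Finset.disjoint_sdiff
      have h1 : (S.filter fun v => c' v = m).card = 1 := by
        obtain ⟨i, hi⟩ := hσbij.2 m
        rw [Finset.card_eq_one]
        refine ⟨x i, ?_⟩
        ext v
        simp only [Finset.mem_filter, Finset.mem_singleton]
        constructor
        · rintro ⟨hvS, hvm⟩
          rw [hidxeq v hvS] at hvm
          have := hσbij.1 (hvm.trans hi.symm)
          rw [← hidxspec v hvS, this]
        · rintro rfl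
          exact ⟨hxS i, (hc'S i).trans hi⟩
      have h2 : ((Finset.univ \ S).filter fun v => c' v = m).card =
          (Finset.univ.filter fun w : {v : V // v ∉ S} => c w = m).card := by
        apply Finset.card_bij
          (i := fun v hv => (⟨v, (Finset.mem_sdiff.mp (Finset.mem_filter.mp hv).1).2⟩ :
            {v : V // v ∉ S}))
        · intro v hv
          have h := Finset.mem_filter.mp hv
          have hns := (Finset.mem_sdiff.mp h.1).2
          rw [Finset.mem_filter]
          exact ⟨Finset.mem_univ _, by rw [← hc'notS v hns]; exact h.2⟩
        · intro a ha b hb hab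
          exact congrArg Subtype.val hab
        · intro b hb
          refine ⟨b.1, ?_, rfl⟩
          rw [Finset.mem_filter, Finset.mem_sdiff]
          refine ⟨⟨Finset.mem_univ _, b.2⟩, ?_⟩
          rw [hc'notS b.1 b.2]
          exact (Finset.mem_filter.mp hb).2
      rw [hsplit, Finset.card_union_of_disjoint hdisj, h1, h2]
      omega
    intro i j
    rw [hcount i, hcount j]
    have := hceq i j
    omega
end

section
/- Let G be a finite simple graph with a k-uniform list assignment L (that is, L assigns to each vertex v of G a set L(v) of colors with |L(v)| = k). Let S = {x_1, x_2, …, x_k} be a set of k pairwise distinct vertices of G. If the induced subgraph G − S has a proper coloring c with c(v) ∈ L(v) for all v ∈ V(G) − S in which each color appears on at most ⌈|V(G − S)|/k⌉ vertices, and |N_G(x_i) \ S| ≤ k − i for every i with 1 ≤ i ≤ k, then G has a proper coloring c' with c'(v) ∈ L(v) for all v ∈ V(G) in which each color appears on at most ⌈|V(G)|/k⌉ vertices. -/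
/-- Greedy selection: pick distinct colors avoiding small forbidden sets. -/
lemma exists_greedy_seq (k : ℕ) (L : Fin k → Finset ℕ) (hL : ∀ i, k ≤ (L i).card)
    (F : Fin k → Finset ℕ) (hF : ∀ i : Fin k, (F i).card + i.val < k) :
    ∃ d : Fin k → ℕ, ∀ i : Fin k, d i ∈ L i ∧ d i ∉ F i ∧ ∀ j : Fin k, j < i → d j ≠ d i := by
  suffices h : ∀ m : ℕ, m ≤ k → ∃ d : Fin k → ℕ, ∀ i : Fin k, i.val < m →
      (d i ∈ L i ∧ d i ∉ F i ∧ ∀ j : Fin k, j < i → d j ≠ d i) by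
    obtain ⟨d, hd⟩ := h k le_rfl
    exact ⟨d, fun i => hd i i.isLt⟩
  intro m
  induction m with
  | zero => exact fun _ => ⟨fun _ => 0, fun i hi => absurd hi (Nat.not_lt_zero _)⟩
  | succ m ih =>
    intro hm
    obtain ⟨d, hd⟩ := ih (Nat.le_of_succ_le hm)
    set i₀ : Fin k := ⟨m, hm⟩ with hi₀
    set prev : Finset ℕ := (Finset.univ.filter fun j : Fin k => j.val < m).image d with hprev
    have hprevcard : prev.card ≤ m := by
      refine le_trans (Finset.card_image_le) ?_
      have : (Finset.univ.filter fun j : Fin k => j.val < m).card ≤ (Finset.range m).card := by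
        apply Finset.card_le_card_of_injOn (fun j => j.val)
        · intro j hj; simp at hj ⊢; exact hj
        · intro a _ b _ hab; exact Fin.ext hab
      simpa using this
    set B : Finset ℕ := F i₀ ∪ prev with hB
    have hBcard : B.card < k := by
      calc B.card ≤ (F i₀).card + prev.card := Finset.card_union_le _ _
        _ ≤ (F i₀).card + m := by omega
        _ < k := hF i₀
    have hnsub : ¬ (L i₀ ⊆ B) := fun hsub =>
      absurd (Finset.card_le_card hsub) (by have := hL i₀; omega)
    obtain ⟨a, haL, haB⟩ := Finset.not_subset.mp hnsub
    refine ⟨Function.update d i₀ a, fun i hi => ?_⟩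
    rcases Nat.lt_succ_iff_lt_or_eq.mp hi with hlt | heq
    · have hne : i ≠ i₀ := fun h => by rw [h] at hlt; exact absurd hlt (lt_irrefl _)
      obtain ⟨h1, h2, h3⟩ := hd i hlt
      refine ⟨by rwa [Function.update_of_ne hne], by rwa [Function.update_of_ne hne], ?_⟩
      intro j hj
      have hjne : j ≠ i₀ := fun h => by
        rw [h] at hj; exact absurd (lt_trans hj (by exact hlt)) (lt_irrefl _)
      rw [Function.update_of_ne hjne, Function.update_of_ne hne]
      exact h3 j hj
    · have hii : i = i₀ := Fin.ext heq
      subst hii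
      rw [Function.update_self]
      refine ⟨haL, fun h => haB (Finset.mem_union_left _ h), ?_⟩
      intro j hj
      have hjne : j ≠ i₀ := Fin.ne_of_lt hj
      rw [Function.update_of_ne hjne]
      intro h
      apply haB
      apply Finset.mem_union_right
      rw [hprev]
      exact Finset.mem_image.mpr ⟨j, Finset.mem_filter.mpr ⟨Finset.mem_univ _, hj⟩, h⟩



/-- List-coloring extension lemma (Kostochka–Pelsmajer–West). Let `G` be a finite
simple graph with a `k`-uniform list assignment `L`, and let `x 0, …, x (k-1)` be
`k` distinct vertices forming a set `S`. If `G − S` has a proper `L`-coloring in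
which each color appears on at most `⌈|V(G − S)|/k⌉` vertices, and
`|N_G(x_i) \ S| ≤ k − i` for `1 ≤ i ≤ k` (here `x i` with `i : Fin k` plays the
role of `x_{i+1}`, so the bound is `k - (i+1)`), then `G` has a proper
`L`-coloring in which each color appears on at most `⌈|V(G)|/k⌉` vertices. -/
theorem equitable_list_coloring_extension {V : Type*} [Fintype V] [DecidableEq V]
    (G : SimpleGraph V) [DecidableRel G.Adj] (k : ℕ) (hk : 0 < k)
    (L : V → Finset ℕ) (hL : ∀ v : V, (L v).card = k)
    (x : Fin k → V) (hx : Function.Injective x)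
    (S : Finset V) (hS : S = Finset.univ.image x)
    (hnbr : ∀ i : Fin k, ((G.neighborFinset (x i)) \ S).card ≤ k - (i.val + 1))
    (hGS : ∃ c : {v : V // v ∉ S} → ℕ,
      (∀ v : {v : V // v ∉ S}, c v ∈ L v.val) ∧
      (∀ u v : {v : V // v ∉ S}, G.Adj u.val v.val → c u ≠ c v) ∧
      ∀ α : ℕ,
        (Finset.univ.filter fun v : {v : V // v ∉ S} => c v = α).card ≤
          (Fintype.card {v : V // v ∉ S} + k - 1) / k) :
    ∃ c : V → ℕ,
      (∀ v : V, c v ∈ L v) ∧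
      (∀ u v : V, G.Adj u v → c u ≠ c v) ∧
      ∀ α : ℕ,
        (Finset.univ.filter fun v => c v = α).card ≤ (Fintype.card V + k - 1) / k := by
  classical
  obtain ⟨c₀, hc₀L, hc₀adj, hc₀cnt⟩ := hGS
  -- forbidden sets
  set F : Fin k → Finset ℕ := fun i =>
    ((G.neighborFinset (x i) \ S).attach).image
      (fun v => c₀ ⟨v.1, (Finset.mem_sdiff.mp v.2).2⟩) with hFdef
  have hFcard : ∀ i : Fin k, (F i).card + i.val < k := by
    intro i
    have h1 : (F i).card ≤ (G.neighborFinset (x i) \ S).card := by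
      refine le_trans Finset.card_image_le ?_
      simp [Finset.card_attach]
    have h2 := hnbr i
    have h3 := i.isLt
    omega
  obtain ⟨d, hd⟩ := exists_greedy_seq k (fun i => L (x i)) (fun i => (hL (x i)).ge) F hFcard
  have hdinj : Function.Injective d := by
    intro i j hij
    rcases lt_trichotomy i j with h | h | h
    · exact absurd hij ((hd j).2.2 i h)
    · exact h
    · exact absurd hij.symm ((hd i).2.2 j h)
  have hxS : ∀ i : Fin k, x i ∈ S := by
    intro i; rw [hS]; exact Finset.mem_image_of_mem x (Finset.mem_univ i)
  have hidx : ∀ v ∈ S, ∃ i : Fin k, x i = v := by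
    intro v hv; rw [hS] at hv
    obtain ⟨i, _, hi⟩ := Finset.mem_image.mp hv
    exact ⟨i, hi⟩
  choose idx hidx' using hidx
  set c : V → ℕ := fun v => if h : v ∈ S then d (idx v h) else c₀ ⟨v, h⟩ with hcdef
  have hcS : ∀ (v : V) (h : v ∈ S), c v = d (idx v h) := by
    intro v h; simp [hcdef, h]
  have hcNS : ∀ (v : V) (h : v ∉ S), c v = c₀ ⟨v, h⟩ := by
    intro v h; simp [hcdef, h]
  -- the "in S vs neighbor out of S" disagreement
  have hkey : ∀ (u v : V) (hu : u ∈ S) (hv : v ∉ S), G.Adj u v → c u ≠ c v := by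
    intro u v hu hv hadj
    rw [hcS u hu, hcNS v hv]
    have hux : x (idx u hu) = u := hidx' u hu
    have hnb : v ∈ G.neighborFinset (x (idx u hu)) \ S := by
      rw [Finset.mem_sdiff, SimpleGraph.mem_neighborFinset, hux]
      exact ⟨hadj, hv⟩
    have hmem : c₀ ⟨v, hv⟩ ∈ F (idx u hu) := by
      rw [hFdef]
      exact Finset.mem_image.mpr ⟨⟨v, hnb⟩, Finset.mem_attach _ _, rfl⟩
    intro h
    exact (hd (idx u hu)).2.1 (h ▸ hmem)
  refine ⟨c, ?_, ?_, ?_⟩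
  · intro v
    by_cases h : v ∈ S
    · rw [hcS v h]
      have := (hd (idx v h)).1
      rwa [hidx' v h] at this
    · rw [hcNS v h]; exact hc₀L ⟨v, h⟩
  · intro u v hadj
    by_cases hu : u ∈ S <;> by_cases hv : v ∈ S
    · rw [hcS u hu, hcS v hv]
      intro h
      have : idx u hu = idx v hv := hdinj h
      have : u = v := by
        rw [← hidx' u hu, ← hidx' v hv, this]
      exact hadj.ne this
    · exact hkey u v hu hv hadj
    · exact fun h => hkey v u hv hu hadj.symm h.symm
    · rw [hcNS u hu, hcNS v hv]
      exact hc₀adj ⟨u, hu⟩ ⟨v, hv⟩ hadj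
  · intro α
    set T : Finset V := Finset.univ.filter fun v => c v = α with hT
    have hsplit : (T.filter fun v => v ∈ S).card + (T.filter fun v => ¬ v ∈ S).card = T.card :=
      Finset.card_filter_add_card_filter_not _
    have hA : (T.filter fun v => v ∈ S).card ≤ 1 := by
      refine Finset.card_le_one.mpr ?_
      intro a ha b hb
      rw [Finset.mem_filter] at ha hb
      obtain ⟨haT, haS⟩ := ha
      obtain ⟨hbT, hbS⟩ := hb
      rw [hT, Finset.mem_filter] at haT hbT
      have hda : d (idx a haS) = α := by rw [← hcS a haS]; exact haT.2
      have hdb : d (idx b hbS) = α := by rw [← hcS b hbS]; exact hbT.2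
      have : idx a haS = idx b hbS := hdinj (hda.trans hdb.symm)
      rw [← hidx' a haS, ← hidx' b hbS, this]
    have hB : (T.filter fun v => ¬ v ∈ S).card =
        (Finset.univ.filter fun v : {v : V // v ∉ S} => c₀ v = α).card := by
      symm
      refine Finset.card_bij (fun v _ => v.1) ?_ ?_ ?_
      · intro a ha
        rw [Finset.mem_filter] at ha
        rw [Finset.mem_filter, hT, Finset.mem_filter]
        refine ⟨⟨Finset.mem_univ _, ?_⟩, a.2⟩
        rw [hcNS a.1 a.2]
        exact ha.2
      · intro a _ b _ h
        exact Subtype.ext h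
      · intro b hb
        rw [Finset.mem_filter, hT, Finset.mem_filter] at hb
        obtain ⟨⟨_, hbα⟩, hbS⟩ := hb
        refine ⟨⟨b, hbS⟩, ?_, rfl⟩
        rw [Finset.mem_filter]
        refine ⟨Finset.mem_univ _, ?_⟩
        rw [← hcNS b hbS]; exact hbα
    have hSk : S.card = k := by
      rw [hS, Finset.card_image_of_injective _ hx]
      simp
    have hcard : Fintype.card {v : V // v ∉ S} = Fintype.card V - k := by
      rw [Fintype.card_subtype_compl, Fintype.card_coe, hSk]
    have hkn : k ≤ Fintype.card V := by
      rw [← hSk]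
      exact Finset.card_le_univ S
    have hbound := hc₀cnt α
    rw [hcard] at hbound
    have htot : T.card ≤ (Fintype.card V - k + k - 1) / k + 1 := by omega
    refine le_trans htot ?_
    rw [show Fintype.card V - k + k - 1 = Fintype.card V - 1 by omega,
        show Fintype.card V + k - 1 = (Fintype.card V - 1) + k by omega,
        Nat.add_div_right _ hk]
end

section
/- Let G be a finite simple graph with maximum degree Δ(G) ≤ 3, and let k be an integer with k ≥ Δ(G) + 1. Then G is equitably k-choosable: for every list assignment L with |L(v)| = k for all vertices v, there is a proper coloring c of G with c(v) ∈ L(v) for all v in which each color appears on at most ⌈|V(G)|/k⌉ vertices. -/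
open Finset

set_option linter.unusedSectionVars false
set_option maxHeartbeats 1600000

namespace EqCh

variable {V : Type*} [Fintype V] [DecidableEq V]
variable (G : SimpleGraph V) [DecidableRel G.Adj] (k : ℕ) (L : V → Finset ℕ)

/-- neighbors of `x` inside `s` -/
def nbrs (s : Finset V) (x : V) : Finset V := s.filter (fun y => G.Adj x y)

lemma mem_nbrs {s : Finset V} {x y : V} : y ∈ nbrs G s x ↔ y ∈ s ∧ G.Adj x y := by
  simp [nbrs]

lemma nbrs_card_le_degree (s : Finset V) (x : V) : (nbrs G s x).card ≤ G.degree x := by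
  classical
  rw [← SimpleGraph.card_neighborFinset_eq_degree]
  apply Finset.card_le_card
  intro y hy
  rw [SimpleGraph.mem_neighborFinset]
  exact (mem_nbrs G).mp hy |>.2

/-- `Good s M`: there is a proper list-coloring of `s` with all color classes of size `≤ M`. -/
def Good (s : Finset V) (M : ℕ) : Prop :=
  ∃ c : V → ℕ, (∀ x ∈ s, c x ∈ L x) ∧
    (∀ u ∈ s, ∀ w ∈ s, G.Adj u w → c u ≠ c w) ∧
    ∀ α : ℕ, (s.filter (fun x => c x = α)).card ≤ M

lemma Good.mono {s : Finset V} {M M' : ℕ} (h : Good G L s M) (hMM : M ≤ M') :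
    Good G L s M' := by
  obtain ⟨c, h1, h2, h3⟩ := h
  exact ⟨c, h1, h2, fun α => le_trans (h3 α) hMM⟩

/-- apply a list of updates (head wins) -/
def applyUpd : List (V × ℕ) → (V → ℕ) → (V → ℕ)
  | [], c => c
  | p :: ps, c => Function.update (applyUpd ps c) p.1 p.2

lemma applyUpd_not_mem {ps : List (V × ℕ)} {c : V → ℕ} {x : V}
    (h : x ∉ ps.map Prod.fst) : applyUpd ps c x = c x := by
  induction ps with
  | nil => rfl
  | cons p ps ih =>
      simp only [List.map_cons, List.mem_cons] at h
      push_neg at h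
      simp only [applyUpd]
      rw [Function.update_apply, if_neg h.1]
      exact ih h.2

lemma applyUpd_mem {ps : List (V × ℕ)} {c : V → ℕ} {x : V} {γ : ℕ}
    (hnd : (ps.map Prod.fst).Nodup) (h : (x, γ) ∈ ps) : applyUpd ps c x = γ := by
  induction ps with
  | nil => simp at h
  | cons p ps ih =>
      simp only [List.map_cons, List.nodup_cons] at hnd
      rcases List.mem_cons.mp h with h | h
      · rw [← h]
        simp [applyUpd, Function.update]
      · have hx : x ∈ ps.map Prod.fst := List.mem_map.mpr ⟨(x, γ), h, rfl⟩
        have hne : x ≠ p.1 := fun he => hnd.1 (he ▸ hx)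
        simp only [applyUpd]
        rw [Function.update_apply, if_neg hne]
        exact ih hnd.2 h

lemma applyUpd_mem_fst {ps : List (V × ℕ)} {c : V → ℕ} {x : V}
    (hnd : (ps.map Prod.fst).Nodup) (h : x ∈ ps.map Prod.fst) :
    ∃ γ : ℕ, (x, γ) ∈ ps ∧ applyUpd ps c x = γ := by
  obtain ⟨p, hp, hfst⟩ := List.mem_map.mp h
  subst hfst
  have hp' : (p.1, p.2) ∈ ps := by simpa using hp
  exact ⟨p.2, hp', applyUpd_mem hnd hp'⟩

/-- a list with Nodup snd image has at most one entry of each color -/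
lemma count_le_one {ps : List (V × ℕ)} (hnd : (ps.map Prod.snd).Nodup) (α : ℕ) :
    (ps.filter (fun p => p.2 = α)).length ≤ 1 := by
  induction ps with
  | nil => simp
  | cons p ps ih =>
      simp only [List.map_cons, List.nodup_cons] at hnd
      by_cases hp : p.2 = α
      · have : ps.filter (fun p => p.2 = α) = [] := by
          rw [List.filter_eq_nil_iff]
          intro q hq hq2
          exact hnd.1 (List.mem_map.mpr ⟨q, hq, by simp only [decide_eq_true_eq] at hq2; rw [hq2, hp]⟩)
        simp [List.filter_cons, hp, this]
      · simpa [List.filter_cons, hp] using ih hnd.2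

/-- The generic finishing lemma: extend a coloring of `H` by a list of updates. -/
lemma finish (s H : Finset V) (c₀ : V → ℕ) (M : ℕ)
    (hInL : ∀ x ∈ H, c₀ x ∈ L x)
    (hProp : ∀ u ∈ H, ∀ w ∈ H, G.Adj u w → c₀ u ≠ c₀ w)
    (ps : List (V × ℕ))
    (hnd : (ps.map Prod.fst).Nodup)
    (hHs : H ⊆ s)
    (hSP : ∀ x ∈ s, x ∉ ps.map Prod.fst → x ∈ H)
    (h1 : ∀ p ∈ ps, p.2 ∈ L p.1)
    (h2 : ∀ p ∈ ps, ∀ y ∈ H, y ∉ ps.map Prod.fst → G.Adj p.1 y → p.2 ≠ c₀ y)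
    (h3 : ∀ p ∈ ps, ∀ q ∈ ps, p.1 ≠ q.1 → G.Adj p.1 q.1 → p.2 ≠ q.2)
    (h4 : ∀ α : ℕ, (H.filter (fun x => x ∉ ps.map Prod.fst ∧ c₀ x = α)).card
          + (ps.filter (fun p => p.2 = α)).length ≤ M) :
    Good G L s M := by
  classical
  refine ⟨applyUpd ps c₀, ?_, ?_, ?_⟩
  · intro x hx
    by_cases hxP : x ∈ ps.map Prod.fst
    · obtain ⟨γ, hmem, heq⟩ := applyUpd_mem_fst hnd hxP
      rw [heq]; exact h1 _ hmem
    · rw [applyUpd_not_mem hxP]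
      exact hInL x (hSP x hx hxP)
  · intro u hu w hw hadj
    by_cases huP : u ∈ ps.map Prod.fst <;> by_cases hwP : w ∈ ps.map Prod.fst
    · obtain ⟨γu, hmu, hequ⟩ := applyUpd_mem_fst (c := c₀) hnd huP
      obtain ⟨γw, hmw, heqw⟩ := applyUpd_mem_fst (c := c₀) hnd hwP
      rw [hequ, heqw]
      exact h3 (u, γu) hmu (w, γw) hmw (G.ne_of_adj hadj) hadj
    · obtain ⟨γu, hmu, hequ⟩ := applyUpd_mem_fst (c := c₀) hnd huP
      rw [hequ, applyUpd_not_mem hwP]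
      exact h2 (u, γu) hmu w (hSP w hw hwP) hwP hadj
    · obtain ⟨γw, hmw, heqw⟩ := applyUpd_mem_fst (c := c₀) hnd hwP
      rw [heqw, applyUpd_not_mem huP]
      exact fun he => (h2 (w, γw) hmw u (hSP u hu huP) huP hadj.symm) he.symm
    · rw [applyUpd_not_mem huP, applyUpd_not_mem hwP]
      exact hProp u (hSP u hu huP) w (hSP w hw hwP) hadj
  · intro α
    have hsub : s.filter (fun x => applyUpd ps c₀ x = α) ⊆
        (H.filter (fun x => x ∉ ps.map Prod.fst ∧ c₀ x = α)) ∪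
        ((ps.filter (fun p => p.2 = α)).map Prod.fst).toFinset := by
      intro x hx
      rw [Finset.mem_filter] at hx
      obtain ⟨hxs, hxα⟩ := hx
      by_cases hxP : x ∈ ps.map Prod.fst
      · refine Finset.mem_union_right _ ?_
        obtain ⟨γ, hmem, heq⟩ := applyUpd_mem_fst (c := c₀) hnd hxP
        rw [List.mem_toFinset, List.mem_map]
        refine ⟨(x, γ), List.mem_filter.mpr ⟨hmem, ?_⟩, rfl⟩
        simp only [decide_eq_true_eq]
        rw [← heq]; exact hxα
      · refine Finset.mem_union_left _ ?_
        rw [Finset.mem_filter]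
        exact ⟨hSP x hxs hxP, hxP, by rw [← applyUpd_not_mem (c := c₀) hxP]; exact hxα⟩
    calc (s.filter (fun x => applyUpd ps c₀ x = α)).card
        ≤ _ := Finset.card_le_card hsub
      _ ≤ (H.filter (fun x => x ∉ ps.map Prod.fst ∧ c₀ x = α)).card
          + ((ps.filter (fun p => p.2 = α)).map Prod.fst).toFinset.card := Finset.card_union_le _ _
      _ ≤ (H.filter (fun x => x ∉ ps.map Prod.fst ∧ c₀ x = α)).card
          + (ps.filter (fun p => p.2 = α)).length := by
            refine Nat.add_le_add_left ?_ _
            exact le_trans (List.toFinset_card_le _) (le_of_eq (List.length_map _))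
      _ ≤ M := h4 α


/-- positional degree bounds for greedy list coloring -/
def Bounded (t : Finset V) : List V → ℕ → Prop
  | [], _ => True
  | x :: r, n => (nbrs G t x).card + n < k ∧ Bounded t r (n + 1)

lemma Bounded_mono {t : Finset V} : ∀ {xs : List V} {n n' : ℕ}, n' ≤ n →
    Bounded G k t xs n → Bounded G k t xs n' := by
  intro xs
  induction xs with
  | nil => intro n n' _ _; trivial
  | cons x r ih =>
      intro n n' h hb
      simp only [Bounded] at hb ⊢
      exact ⟨by omega, ih (by omega) hb.2⟩

lemma Bounded_append {t : Finset V} {ys : List V} : ∀ {xs : List V} {n : ℕ},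
    (∀ x ∈ xs, (nbrs G t x).card + n + xs.length ≤ k) →
    Bounded G k t ys (n + xs.length) → Bounded G k t (xs ++ ys) n := by
  intro xs
  induction xs with
  | nil => intro n _ hy; simpa using hy
  | cons x r ih =>
      intro n hx hy
      simp only [List.cons_append, Bounded]
      constructor
      · have := hx x List.mem_cons_self
        simp only [List.length_cons] at this
        omega
      · refine ih ?_ ?_
        · intro z hz
          have := hx z (List.mem_cons_of_mem _ hz)
          simp only [List.length_cons] at this
          omega
        · have : n + (x :: r).length = n + 1 + r.length := by simp [List.length_cons]; omega
          rw [this] at hy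
          exact hy

lemma Bounded_nil {t : Finset V} {n : ℕ} : Bounded G k t [] n := trivial

lemma exists_rainbow (hL : ∀ v, (L v).card = k) (t : Finset V) (c₀ : V → ℕ) :
    ∀ (xs : List V) (fresh : Finset ℕ), Bounded G k t xs fresh.card →
    ∃ ps : List (V × ℕ), ps.map Prod.fst = xs ∧ (ps.map Prod.snd).Nodup ∧
      ∀ p ∈ ps, p.2 ∈ L p.1 ∧ p.2 ∉ (nbrs G t p.1).image c₀ ∧ p.2 ∉ fresh := by
  intro xs
  induction xs with
  | nil => intro fresh _; exact ⟨[], rfl, by simp, by simp⟩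
  | cons x r ih =>
      intro fresh hb
      simp only [Bounded] at hb
      obtain ⟨hb1, hb2⟩ := hb
      have hne : ((L x) \ ((nbrs G t x).image c₀ ∪ fresh)).Nonempty := by
        rw [← Finset.card_pos]
        have h1 := Finset.card_le_card_sdiff_add_card (s := L x)
          (t := (nbrs G t x).image c₀ ∪ fresh)
        have h2 : ((nbrs G t x).image c₀ ∪ fresh).card ≤ (nbrs G t x).card + fresh.card :=
          le_trans (Finset.card_union_le _ _) (Nat.add_le_add_right Finset.card_image_le _)
        have h3 := hL x
        omega
      obtain ⟨γ, hγ⟩ := hne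
      rw [Finset.mem_sdiff, Finset.mem_union, not_or] at hγ
      obtain ⟨hγL, hγ1, hγ2⟩ := hγ
      have hb2' : Bounded G k t r (insert γ fresh).card :=
        Bounded_mono G k (le_trans (Finset.card_insert_le _ _) (by omega)) hb2
      obtain ⟨ps, hfst, hsnd, hpp⟩ := ih (insert γ fresh) hb2'
      refine ⟨(x, γ) :: ps, by simp [hfst], ?_, ?_⟩
      · rw [List.map_cons, List.nodup_cons]
        refine ⟨?_, hsnd⟩
        intro hmem
        obtain ⟨p, hp, hp2⟩ := List.mem_map.mp hmem
        exact (hpp p hp).2.2 (hp2 ▸ Finset.mem_insert_self γ fresh)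
      · intro p hp
        rcases List.mem_cons.mp hp with rfl | hp
        · exact ⟨hγL, hγ1, hγ2⟩
        · obtain ⟨q1, q2, q3⟩ := hpp p hp
          exact ⟨q1, q2, fun h => q3 (Finset.mem_insert_of_mem h)⟩

lemma greedy (hL : ∀ v, (L v).card = k) (t : Finset V) (c₀ : V → ℕ) (M : ℕ)
    (hInL : ∀ x ∈ t, c₀ x ∈ L x)
    (hProp : ∀ u ∈ t, ∀ w ∈ t, G.Adj u w → c₀ u ≠ c₀ w)
    (hBnd : ∀ α : ℕ, (t.filter (fun x => c₀ x = α)).card ≤ M)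
    (xs : List V) (hnd : xs.Nodup) (hdis : ∀ x ∈ xs, x ∉ t)
    (hb : Bounded G k t xs 0) (s : Finset V) (hs : s = t ∪ xs.toFinset) :
    Good G L s (M + 1) := by
  classical
  obtain ⟨ps, hfst, hsnd, hpp⟩ := exists_rainbow G k L hL t c₀ xs ∅ (by simpa using hb)
  apply finish G L s t c₀ (M + 1) hInL hProp ps (by rw [hfst]; exact hnd)
    (hs ▸ Finset.subset_union_left)
  · intro x hx hxP
    rw [hfst] at hxP
    rw [hs, Finset.mem_union] at hx
    rcases hx with hx | hx
    · exact hx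
    · exact absurd (List.mem_toFinset.mp hx) hxP
  · exact fun p hp => (hpp p hp).1
  · intro p hp y hy _ hadj
    intro he
    exact (hpp p hp).2.1 (Finset.mem_image.mpr ⟨y, (mem_nbrs G).mpr ⟨hy, hadj⟩, he.symm⟩)
  · intro p hp q hq hne _
    intro he
    exact hne (congrArg Prod.fst (List.inj_on_of_nodup_map hsnd hp hq he))
  · intro α
    have h1 : (t.filter (fun x => x ∉ ps.map Prod.fst ∧ c₀ x = α)).card
        ≤ (t.filter (fun x => c₀ x = α)).card :=
      Finset.card_le_card (Finset.filter_subset_filter _ (by intro x hx; exact hx) |>.trans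
        (by intro x hx; rw [Finset.mem_filter] at hx ⊢; exact ⟨hx.1, hx.2.2⟩))
    exact le_trans (Nat.add_le_add (le_trans h1 (hBnd α)) (count_le_one hsnd α)) (by omega)



lemma nbrs_sdiff (s P : Finset V) (x : V) : nbrs G (s \ P) x = (nbrs G s x) \ P := by
  ext y
  simp only [mem_nbrs, Finset.mem_sdiff]
  tauto

lemma ds_mono {s t : Finset V} (h : s ⊆ t) (x : V) : (nbrs G s x).card ≤ (nbrs G t x).card :=
  Finset.card_le_card (fun y hy => (mem_nbrs G).mpr ⟨h ((mem_nbrs G).mp hy).1, ((mem_nbrs G).mp hy).2⟩)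

lemma ds_sdiff_le (s P : Finset V) (x : V) (T : Finset V)
    (hT : ∀ y ∈ T, y ∈ P ∧ y ∈ s ∧ G.Adj x y) :
    (nbrs G (s \ P) x).card + T.card ≤ (nbrs G s x).card := by
  rw [nbrs_sdiff]
  have h2 : T ⊆ (nbrs G s x) ∩ P := by
    intro y hy
    obtain ⟨hy1, hy2, hy3⟩ := hT y hy
    exact Finset.mem_inter.mpr ⟨(mem_nbrs G).mpr ⟨hy2, hy3⟩, hy1⟩
  have h3 := Finset.card_le_card h2
  have h4 : ((nbrs G s x) \ P).card + ((nbrs G s x) ∩ P).card = (nbrs G s x).card :=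
    Finset.card_sdiff_add_card_inter _ _
  omega

lemma ds_sdiff_zero (s P : Finset V) (x : V) (h : nbrs G s x ⊆ P) :
    (nbrs G (s \ P) x).card = 0 := by
  rw [nbrs_sdiff, Finset.card_eq_zero, Finset.sdiff_eq_empty_iff_subset]
  exact h

/-- helper producing the easy disjunct of `construct` from an explicit 4-list, when `k = 4`. -/
lemma mk4 (hd3' : ∀ x : V, G.degree x ≤ 3) (hk4 : k = 4) (s : Finset V) (x1 x2 x3 x4 : V)
    (h1s : x1 ∈ s) (h2s : x2 ∈ s) (h3s : x3 ∈ s) (h4s : x4 ∈ s)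
    (h12 : x1 ≠ x2) (h13 : x1 ≠ x3) (h14 : x1 ≠ x4)
    (h23 : x2 ≠ x3) (h24 : x2 ≠ x4) (h34 : x3 ≠ x4)
    (b2 : (nbrs G (s \ {x1, x2, x3, x4}) x2).card ≤ 2)
    (b3 : (nbrs G (s \ {x1, x2, x3, x4}) x3).card ≤ 1)
    (b4 : (nbrs G (s \ {x1, x2, x3, x4}) x4).card = 0) :
    ∃ xs : List V, xs.Nodup ∧ xs.length = k ∧ (∀ x ∈ xs, x ∈ s) ∧
        Bounded G k (s \ xs.toFinset) xs 0 := by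
  refine ⟨[x1, x2, x3, x4], by simp [h12, h13, h14, h23, h24, h34], by simp [hk4], ?_, ?_⟩
  · intro x hx
    simp only [List.mem_cons, List.not_mem_nil, or_false] at hx
    rcases hx with rfl | rfl | rfl | rfl
    exacts [h1s, h2s, h3s, h4s]
  · have hTF : ([x1, x2, x3, x4] : List V).toFinset = ({x1, x2, x3, x4} : Finset V) := by
      simp
    rw [hTF]
    have b1 : (nbrs G (s \ {x1, x2, x3, x4}) x1).card ≤ 3 := by
      have h5 := ds_mono G (Finset.sdiff_subset (s := s) (t := {x1, x2, x3, x4})) x1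
      have h6 := nbrs_card_le_degree G s x1
      have h7 := hd3' x1
      omega
    simp only [Bounded]
    refine ⟨by omega, by omega, by omega, by omega, trivial⟩

/-- Either we find a removable ordered set of `k` vertices, or we are in the hard
configuration: `k = 4` and `s` induces a cubic triangle-free graph. -/
lemma construct (hdk : ∀ x : V, G.degree x < k) (hd3 : ∀ x : V, G.degree x ≤ 3)
    (s : Finset V) (hcard : k + 1 ≤ s.card) :
    (∃ xs : List V, xs.Nodup ∧ xs.length = k ∧ (∀ x ∈ xs, x ∈ s) ∧
        Bounded G k (s \ xs.toFinset) xs 0)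
    ∨ (k = 4 ∧ ∃ v ∈ s, ∃ a ∈ s, ∃ b ∈ s, ∃ c ∈ s,
        G.Adj v a ∧ G.Adj v b ∧ G.Adj v c ∧ a ≠ b ∧ a ≠ c ∧ b ≠ c ∧
        ¬ G.Adj a b ∧ ¬ G.Adj a c ∧ ¬ G.Adj b c ∧
        ∀ x ∈ s, (nbrs G s x).card = 3) := by
  classical
  by_cases hd2 : ∀ x ∈ s, (nbrs G s x).card ≤ 2
  · -- construction (a): all degrees in s at most 2
    left
    have hne : s.Nonempty := Finset.card_pos.mp (by omega)
    obtain ⟨v, hv, hvmax⟩ := Finset.exists_max_image s (fun x => (nbrs G s x).card) hne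
    set d := (nbrs G s v).card with hd
    have hdlt : d < k := lt_of_le_of_lt (nbrs_card_le_degree G s v) (hdk v)
    set Nv := nbrs G s v with hNv
    have hNvs : Nv ⊆ s := Finset.filter_subset _ _
    have hvNv : v ∉ Nv := fun h => G.irrefl ((mem_nbrs G).mp h).2
    have hsub1 : insert v Nv ⊆ s := Finset.insert_subset hv hNvs
    have hcard1 : (insert v Nv).card ≤ d + 1 :=
      le_trans (Finset.card_insert_le _ _) (by omega)
    have havail : k - d - 1 ≤ (s \ insert v Nv).card := by
      rw [Finset.card_sdiff_of_subset hsub1]; omega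
    obtain ⟨pads, hpadsub, hpadcard⟩ := Finset.exists_subset_card_eq havail
    set xs := pads.toList ++ (Nv.toList ++ [v]) with hxs
    have hlen1 : pads.toList.length = k - d - 1 := by rw [Finset.length_toList, hpadcard]
    have hlen2 : Nv.toList.length = d := by rw [Finset.length_toList]
    have hlenxs : xs.length = k := by
      simp only [hxs, List.length_append, List.length_cons, List.length_nil, hlen1, hlen2]
      omega
    have hnd : xs.Nodup := by
      rw [hxs]
      refine List.Nodup.append (Finset.nodup_toList _) ?_ ?_
      · refine List.Nodup.append (Finset.nodup_toList _) (List.nodup_singleton v) ?_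
        intro x hx1 hx2
        simp only [List.mem_singleton] at hx2
        exact hvNv (hx2 ▸ (Finset.mem_toList.mp hx1))
      · intro x hx1 hx2
        have h2 := Finset.mem_sdiff.mp (hpadsub (Finset.mem_toList.mp hx1))
        rcases List.mem_append.mp hx2 with hx | hx
        · exact h2.2 (Finset.mem_insert_of_mem (Finset.mem_toList.mp hx))
        · simp only [List.mem_singleton] at hx
          exact h2.2 (hx ▸ Finset.mem_insert_self _ _)
    have hmem : ∀ x ∈ xs, x ∈ s := by
      intro x hx
      rw [hxs] at hx
      rcases List.mem_append.mp hx with hx | hx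
      · exact (Finset.mem_sdiff.mp (hpadsub (Finset.mem_toList.mp hx))).1
      · rcases List.mem_append.mp hx with hx | hx
        · exact hNvs (Finset.mem_toList.mp hx)
        · simp only [List.mem_singleton] at hx; exact hx ▸ hv
    refine ⟨xs, hnd, hlenxs, hmem, ?_⟩
    have hvP : v ∈ xs.toFinset := by
      rw [hxs]; simp
    have hNvP : ∀ y ∈ Nv, y ∈ xs.toFinset := by
      intro y hy; rw [hxs]; simp only [List.toFinset_append, Finset.mem_union,
        List.mem_toFinset, Finset.mem_toList, List.toFinset_cons, List.toFinset_nil]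
      exact Or.inr (Or.inl hy)
    have hd2v : d ≤ 2 := hd ▸ hd2 v hv
    conv_lhs => rw [hxs]
    apply Bounded_append
    · intro x hx
      have h1 := ds_mono G (Finset.sdiff_subset (s := s) (t := xs.toFinset)) x
      have h2 := hvmax x (hmem x (by rw [hxs]; exact List.mem_append_left _ hx))
      rw [hlen1]
      omega
    · rw [hlen1]
      apply Bounded_append
      · intro y hy
        have hyNv : y ∈ Nv := Finset.mem_toList.mp hy
        have hadj : G.Adj v y := ((mem_nbrs G).mp hyNv).2
        have h1 : (nbrs G (s \ xs.toFinset) y).card + 1 ≤ (nbrs G s y).card := by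
          have h0 := ds_sdiff_le G s xs.toFinset y {v} ?_
          · simpa using h0
          · intro z hz
            simp only [Finset.mem_singleton] at hz
            rw [hz]
            exact ⟨hvP, hv, hadj.symm⟩
        have h2 := hvmax y (hNvs hyNv)
        rw [hlen2]
        omega
      · rw [hlen2]
        simp only [Bounded]
        refine ⟨?_, trivial⟩
        have h0 : (nbrs G (s \ xs.toFinset) v).card = 0 :=
          ds_sdiff_zero G s xs.toFinset v (fun y hy => hNvP y hy)
        omega
  · push_neg at hd2
    obtain ⟨v3, hv3s, hv3d⟩ := hd2
    have hv3 : (nbrs G s v3).card = 3 :=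
      le_antisymm (le_trans (nbrs_card_le_degree G s v3) (hd3 v3)) hv3d
    have hk4' : 4 ≤ k := by
      have := lt_of_le_of_lt (nbrs_card_le_degree G s v3) (hdk v3)
      omega
    obtain ⟨a1, a2, a3, h12, h13, h23, hNveq⟩ := Finset.card_eq_three.mp hv3
    have ha1 : a1 ∈ nbrs G s v3 := by rw [hNveq]; simp
    have ha2 : a2 ∈ nbrs G s v3 := by rw [hNveq]; simp
    have ha3 : a3 ∈ nbrs G s v3 := by rw [hNveq]; simp
    have ha1s : a1 ∈ s := ((mem_nbrs G).mp ha1).1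
    have ha2s : a2 ∈ s := ((mem_nbrs G).mp ha2).1
    have ha3s : a3 ∈ s := ((mem_nbrs G).mp ha3).1
    have hva1 : G.Adj v3 a1 := ((mem_nbrs G).mp ha1).2
    have hva2 : G.Adj v3 a2 := ((mem_nbrs G).mp ha2).2
    have hva3 : G.Adj v3 a3 := ((mem_nbrs G).mp ha3).2
    have hv3a1 : v3 ≠ a1 := G.ne_of_adj hva1
    have hv3a2 : v3 ≠ a2 := G.ne_of_adj hva2
    have hv3a3 : v3 ≠ a3 := G.ne_of_adj hva3
    by_cases hk5 : 5 ≤ k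
    · -- construction (b)
      left
      set core : Finset V := {v3, a1, a2, a3} with hcore
      have hcores : core ⊆ s := by
        intro x hx
        simp only [hcore, Finset.mem_insert, Finset.mem_singleton] at hx
        rcases hx with rfl | rfl | rfl | rfl
        exacts [hv3s, ha1s, ha2s, ha3s]
      have hcorecard : core.card ≤ 4 := by
        have t1 : ({a3} : Finset V).card = 1 := Finset.card_singleton _
        have t2 := Finset.card_insert_le a2 ({a3} : Finset V)
        have t3 := Finset.card_insert_le a1 ({a2, a3} : Finset V)
        have t4 := Finset.card_insert_le v3 ({a1, a2, a3} : Finset V)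
        simp only [hcore]
        omega
      -- choose u
      have hucase : ∃ u, u ∈ s ∧ u ∉ core ∧
          ((nbrs G s a3 \ core).Nonempty → G.Adj a3 u) ∧
          (¬ (nbrs G s a3 \ core).Nonempty → True) := by
        by_cases hX : (nbrs G s a3 \ core).Nonempty
        · obtain ⟨u, hu⟩ := hX
          rw [Finset.mem_sdiff] at hu
          exact ⟨u, ((mem_nbrs G).mp hu.1).1, hu.2, fun _ => ((mem_nbrs G).mp hu.1).2, fun _ => trivial⟩
        · have : (s \ core).Nonempty := by
            rw [← Finset.card_pos, Finset.card_sdiff_of_subset hcores]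
            omega
          obtain ⟨u, hu⟩ := this
          rw [Finset.mem_sdiff] at hu
          exact ⟨u, hu.1, hu.2, fun h => absurd h hX, fun _ => trivial⟩
      obtain ⟨u, hus, hucore, huadj, -⟩ := hucase
      have hcoreu : insert u core ⊆ s := Finset.insert_subset hus hcores
      have hcoreucard : (insert u core).card ≤ 5 :=
        le_trans (Finset.card_insert_le _ _) (by omega)
      have havail : k - 5 ≤ (s \ insert u core).card := by
        rw [Finset.card_sdiff_of_subset hcoreu]; omega
      obtain ⟨pads, hpadsub, hpadcard⟩ := Finset.exists_subset_card_eq havail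
      set xs := pads.toList ++ [u, a1, a2, a3, v3] with hxs
      have hlen1 : pads.toList.length = k - 5 := by rw [Finset.length_toList, hpadcard]
      have htailmem : ∀ x ∈ [u, a1, a2, a3, v3], x ∈ insert u core := by
        intro x hx
        simp only [List.mem_cons, List.not_mem_nil, or_false] at hx
        rcases hx with rfl | rfl | rfl | rfl | rfl
        · exact Finset.mem_insert_self _ _
        · exact Finset.mem_insert_of_mem (by simp [hcore])
        · exact Finset.mem_insert_of_mem (by simp [hcore])
        · exact Finset.mem_insert_of_mem (by simp [hcore])
        · exact Finset.mem_insert_of_mem (by simp [hcore])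
      have hlenxs : xs.length = k := by
        simp only [hxs, List.length_append, List.length_cons, List.length_nil, hlen1]
        omega
      have hua1 : u ≠ a1 := fun h => hucore (by simp [hcore, h])
      have hua2 : u ≠ a2 := fun h => hucore (by simp [hcore, h])
      have hua3 : u ≠ a3 := fun h => hucore (by simp [hcore, h])
      have huv3 : u ≠ v3 := fun h => hucore (by simp [hcore, h])
      have hnd : xs.Nodup := by
          rw [hxs]
          refine List.Nodup.append (Finset.nodup_toList _) ?_ ?_
          · simp [hua1, hua2, hua3, huv3, h12, h13, h23, hv3a1.symm, hv3a2.symm, hv3a3.symm]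
          · intro x hx1 hx2
            have h2 := Finset.mem_sdiff.mp (hpadsub (Finset.mem_toList.mp hx1))
            exact h2.2 (htailmem x hx2)
      have hmem : ∀ x ∈ xs, x ∈ s := by
          intro x hx
          rw [hxs] at hx
          rcases List.mem_append.mp hx with hx | hx
          · exact (Finset.mem_sdiff.mp (hpadsub (Finset.mem_toList.mp hx))).1
          · exact hcoreu (htailmem x hx)
      refine ⟨xs, hnd, hlenxs, hmem, ?_⟩
      have hcoreP : ∀ x ∈ insert u core, x ∈ xs.toFinset := by
          intro x hx
          rw [hxs, List.toFinset_append, Finset.mem_union]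
          right
          rw [List.mem_toFinset]
          simp only [hcore, Finset.mem_insert, Finset.mem_singleton] at hx
          rcases hx with rfl | rfl | rfl | rfl | rfl <;> simp
      have ha3bound : (nbrs G (s \ xs.toFinset) a3).card ≤ 1 := by
          by_cases hX : (nbrs G s a3 \ core).Nonempty
          · have h0 := ds_sdiff_le G s xs.toFinset a3 {v3, u} ?_
            · have h1 : ({v3, u} : Finset V).card = 2 := by
                rw [Finset.card_insert_of_notMem (by simp [huv3.symm]), Finset.card_singleton]
              have h2 : (nbrs G s a3).card ≤ 3 :=
                le_trans (nbrs_card_le_degree G s a3) (hd3 a3)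
              omega
            · intro z hz
              simp only [Finset.mem_insert, Finset.mem_singleton] at hz
              rcases hz with h | h
              · rw [h]
                exact ⟨hcoreP v3 (Finset.mem_insert_of_mem (by simp [hcore])), hv3s, hva3.symm⟩
              · rw [h]
                exact ⟨hcoreP u (Finset.mem_insert_self _ _), hus, huadj hX⟩
          · have h0 : nbrs G s a3 ⊆ xs.toFinset := by
              intro y hy
              by_cases hyc : y ∈ core
              · exact hcoreP y (Finset.mem_insert_of_mem hyc)
              · exact absurd ⟨y, Finset.mem_sdiff.mpr ⟨hy, hyc⟩⟩ hX
            rw [ds_sdiff_zero G s xs.toFinset a3 h0]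
            omega
      conv_lhs => rw [hxs]
      apply Bounded_append
      · intro x hx
        have h1 := ds_mono G (Finset.sdiff_subset (s := s) (t := xs.toFinset)) x
        have h2 : (nbrs G s x).card ≤ 3 :=
          le_trans (nbrs_card_le_degree G s x) (hd3 x)
        rw [hlen1]
        omega
      · rw [hlen1]
        have hu3 : (nbrs G (s \ xs.toFinset) u).card ≤ 3 :=
          le_trans (ds_mono G (Finset.sdiff_subset) u)
            (le_trans (nbrs_card_le_degree G s u) (hd3 u))
        have hai : ∀ i, i = a1 ∨ i = a2 → (nbrs G (s \ xs.toFinset) i).card ≤ 2 := by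
          intro i hi
          have hadj : G.Adj i v3 := by rcases hi with rfl | rfl; exacts [hva1.symm, hva2.symm]
          have h0 := ds_sdiff_le G s xs.toFinset i {v3} ?_
          · have h2 : (nbrs G s i).card ≤ 3 :=
              le_trans (nbrs_card_le_degree G s i) (hd3 i)
            simp only [Finset.card_singleton] at h0
            omega
          · intro z hz
            simp only [Finset.mem_singleton] at hz
            rw [hz]
            exact ⟨hcoreP v3 (Finset.mem_insert_of_mem (by simp [hcore])), hv3s, hadj⟩
        have hv30 : (nbrs G (s \ xs.toFinset) v3).card = 0 := by
          refine ds_sdiff_zero G s xs.toFinset v3 ?_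
          intro y hy
          rw [hNveq] at hy
          simp only [Finset.mem_insert, Finset.mem_singleton] at hy
          rcases hy with rfl | rfl | rfl <;>
            exact hcoreP _ (Finset.mem_insert_of_mem (by simp [hcore]))
        have hb1 := hai a1 (Or.inl rfl)
        have hb2 := hai a2 (Or.inr rfl)
        simp only [Bounded]
        refine ⟨by omega, by omega, by omega, by omega, by omega, trivial⟩
    · -- k = 4 micro-cases
      have hk4 : k = 4 := by omega
      by_cases hA : ∃ z ∈ s, ∃ y ∈ s, G.Adj z y ∧ (nbrs G s z).card = 3 ∧ (nbrs G s y).card ≤ 2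
      · left
        obtain ⟨z, hzs, y, hys, hzy, hz3, hy2⟩ := hA
        have key : ∀ o1 o2 : V, o1 ≠ o2 → o1 ≠ y → o2 ≠ y → nbrs G s z = {o1, o2, y} →
            ∃ xs : List V, xs.Nodup ∧ xs.length = k ∧ (∀ x ∈ xs, x ∈ s) ∧
              Bounded G k (s \ xs.toFinset) xs 0 := by
          intro o1 o2 ho12 ho1y ho2y hEq
          have ho1N : o1 ∈ nbrs G s z := by rw [hEq]; simp
          have ho2N : o2 ∈ nbrs G s z := by rw [hEq]; simp
          have ho1s : o1 ∈ s := ((mem_nbrs G).mp ho1N).1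
          have ho2s : o2 ∈ s := ((mem_nbrs G).mp ho2N).1
          have hadj1 : G.Adj z o1 := ((mem_nbrs G).mp ho1N).2
          have hadj2 : G.Adj z o2 := ((mem_nbrs G).mp ho2N).2
          refine mk4 G k hd3 hk4 s o1 o2 y z ho1s ho2s hys hzs ho12 ho1y
            (G.ne_of_adj hadj1).symm ho2y (G.ne_of_adj hadj2).symm (G.ne_of_adj hzy).symm ?_ ?_ ?_
          · have h0 := ds_sdiff_le G s {o1, o2, y, z} o2 {z} ?_
            · have h2 : (nbrs G s o2).card ≤ 3 := le_trans (nbrs_card_le_degree G s o2) (hd3 o2)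
              simp only [Finset.card_singleton] at h0
              omega
            · intro t ht
              simp only [Finset.mem_singleton] at ht
              rw [ht]
              exact ⟨by simp, hzs, hadj2.symm⟩
          · have h0 := ds_sdiff_le G s {o1, o2, y, z} y {z} ?_
            · simp only [Finset.card_singleton] at h0
              omega
            · intro t ht
              simp only [Finset.mem_singleton] at ht
              rw [ht]
              exact ⟨by simp, hzs, hzy.symm⟩
          · refine ds_sdiff_zero G s _ z ?_
            rw [hEq]
            intro t ht
            simp only [Finset.mem_insert, Finset.mem_singleton] at ht ⊢
            tauto
        obtain ⟨p, q, r, hpq, hpr, hqr, hNz⟩ := Finset.card_eq_three.mp hz3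
        have hyN : y ∈ nbrs G s z := (mem_nbrs G).mpr ⟨hys, hzy⟩
        rw [hNz] at hyN
        simp only [Finset.mem_insert, Finset.mem_singleton] at hyN
        rcases hyN with rfl | rfl | rfl
        · refine key q r hqr (Ne.symm hpq) (Ne.symm hpr) ?_
          rw [hNz]; ext t
          simp only [Finset.mem_insert, Finset.mem_singleton]; tauto
        · refine key p r hpr hpq (Ne.symm hqr) ?_
          rw [hNz]; ext t
          simp only [Finset.mem_insert, Finset.mem_singleton]; tauto
        · exact key p q hpq hpr hqr hNz
      · by_cases hB : ∃ z ∈ s, ∃ y1 ∈ s, ∃ y2 ∈ s, y1 ≠ y2 ∧ G.Adj z y1 ∧ G.Adj z y2 ∧ G.Adj y1 y2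
        · left
          obtain ⟨z, hzs, y1, hy1s, y2, hy2s, hy12ne, hzy1, hzy2, hy12⟩ := hB
          have hzy1' : z ≠ y1 := G.ne_of_adj hzy1
          have hzy2' : z ≠ y2 := G.ne_of_adj hzy2
          have hyzsub : ({y1, y2} : Finset V) ⊆ nbrs G s z := by
            intro t ht
            simp only [Finset.mem_insert, Finset.mem_singleton] at ht
            rcases ht with rfl | rfl
            · exact (mem_nbrs G).mpr ⟨hy1s, hzy1⟩
            · exact (mem_nbrs G).mpr ⟨hy2s, hzy2⟩
          have hy2card : ({y1, y2} : Finset V).card = 2 := by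
            rw [Finset.card_insert_of_notMem (by simp [hy12ne]), Finset.card_singleton]
          have hXcard : (nbrs G s z \ {y1, y2}).card ≤ 1 := by
            rw [Finset.card_sdiff_of_subset hyzsub]
            have h2 : (nbrs G s z).card ≤ 3 := le_trans (nbrs_card_le_degree G s z) (hd3 z)
            omega
          have key2 : ∀ x1 : V, x1 ∈ s → x1 ≠ y1 → x1 ≠ y2 → x1 ≠ z →
              nbrs G s z ⊆ {x1, y1, y2, z} →
              ∃ xs : List V, xs.Nodup ∧ xs.length = k ∧ (∀ x ∈ xs, x ∈ s) ∧
                Bounded G k (s \ xs.toFinset) xs 0 := by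
            intro x1 hx1s hx1y1 hx1y2 hx1z hcov
            refine mk4 G k hd3 hk4 s x1 y1 y2 z hx1s hy1s hy2s hzs hx1y1 hx1y2 hx1z
              hy12ne (Ne.symm hzy1') (Ne.symm hzy2') ?_ ?_ ?_
            · have h0 := ds_sdiff_le G s {x1, y1, y2, z} y1 {z, y2} ?_
              · have h2 : (nbrs G s y1).card ≤ 3 :=
                  le_trans (nbrs_card_le_degree G s y1) (hd3 y1)
                have h3 : ({z, y2} : Finset V).card = 2 := by
                  rw [Finset.card_insert_of_notMem (by simp [hzy2']), Finset.card_singleton]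
                omega
              · intro t ht
                simp only [Finset.mem_insert, Finset.mem_singleton] at ht
                rcases ht with h | h <;> rw [h]
                · exact ⟨by simp, hzs, hzy1.symm⟩
                · exact ⟨by simp, hy2s, hy12⟩
            · have h0 := ds_sdiff_le G s {x1, y1, y2, z} y2 {z, y1} ?_
              · have h2 : (nbrs G s y2).card ≤ 3 :=
                  le_trans (nbrs_card_le_degree G s y2) (hd3 y2)
                have h3 : ({z, y1} : Finset V).card = 2 := by
                  rw [Finset.card_insert_of_notMem (by simp [hzy1']), Finset.card_singleton]
                omega
              · intro t ht
                simp only [Finset.mem_insert, Finset.mem_singleton] at ht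
                rcases ht with h | h <;> rw [h]
                · exact ⟨by simp, hzs, hzy2.symm⟩
                · exact ⟨by simp, hy1s, hy12.symm⟩
            · exact ds_sdiff_zero G s _ z hcov
          by_cases hXne : (nbrs G s z \ {y1, y2}).Nonempty
          · obtain ⟨o, ho⟩ := hXne
            rw [Finset.mem_sdiff] at ho
            have hoz : o ≠ z := fun h => G.irrefl (h ▸ ((mem_nbrs G).mp ho.1).2)
            have ho1 : o ≠ y1 := fun h => ho.2 (by simp [h])
            have ho2 : o ≠ y2 := fun h => ho.2 (by simp [h])
            refine key2 o ((mem_nbrs G).mp ho.1).1 ho1 ho2 hoz ?_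
            intro t ht
            by_cases ht12 : t ∈ ({y1, y2} : Finset V)
            · simp only [Finset.mem_insert, Finset.mem_singleton] at ht12 ⊢
              tauto
            · have htX : t ∈ nbrs G s z \ {y1, y2} := Finset.mem_sdiff.mpr ⟨ht, ht12⟩
              have hto : t = o := Finset.card_le_one.mp hXcard t htX o (Finset.mem_sdiff.mpr ho)
              simp [hto]
          · have hemp : nbrs G s z ⊆ {y1, y2} := by
              rw [← Finset.sdiff_eq_empty_iff_subset]
              exact Finset.not_nonempty_iff_eq_empty.mp hXne
            have h3sub : ({z, y1, y2} : Finset V) ⊆ s := by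
              intro t ht
              simp only [Finset.mem_insert, Finset.mem_singleton] at ht
              rcases ht with rfl | rfl | rfl
              exacts [hzs, hy1s, hy2s]
            have h3card : ({z, y1, y2} : Finset V).card ≤ 3 := by
              refine le_trans (Finset.card_insert_le _ _) ?_
              have := Finset.card_insert_le y1 ({y2} : Finset V)
              simp only [Finset.card_singleton] at this
              omega
            have hpadsne : (s \ {z, y1, y2}).Nonempty := by
              rw [← Finset.card_pos, Finset.card_sdiff_of_subset h3sub]
              omega
            obtain ⟨p, hp⟩ := hpadsne
            rw [Finset.mem_sdiff] at hp
            have hp1 : p ≠ y1 := fun h => hp.2 (by simp [h])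
            have hp2 : p ≠ y2 := fun h => hp.2 (by simp [h])
            have hpz : p ≠ z := fun h => hp.2 (by simp [h])
            refine key2 p hp.1 hp1 hp2 hpz ?_
            intro t ht
            have := hemp ht
            simp only [Finset.mem_insert, Finset.mem_singleton] at this ⊢
            tauto
        · by_cases hC : ∃ w ∈ s, (nbrs G s w).card ≤ 2
          · left
            obtain ⟨w, hws, hw2⟩ := hC
            have hnbr2 : ∀ y ∈ nbrs G s w, (nbrs G s y).card ≤ 2 := by
              intro y hy
              by_contra hy3
              push_neg at hy3
              have hy3' : (nbrs G s y).card = 3 :=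
                le_antisymm (le_trans (nbrs_card_le_degree G s y) (hd3 y)) hy3
              exact hA ⟨y, ((mem_nbrs G).mp hy).1, w, hws, ((mem_nbrs G).mp hy).2.symm, hy3', hw2⟩
            have h3v : (nbrs G s w).card = 0 ∨ (nbrs G s w).card = 1 ∨
                (nbrs G s w).card = 2 := by omega
            rcases h3v with h0 | h1 | h2cc
            · rw [Finset.card_eq_zero] at h0
              have hwv3 : w ≠ v3 := by
                intro h
                rw [← h] at hv3
                rw [h0] at hv3
                simp at hv3
              have hwa : ∀ t, t ∈ nbrs G s v3 → t ≠ w := by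
                intro t ht hc
                have hadj : G.Adj w v3 := (hc ▸ ((mem_nbrs G).mp ht).2).symm
                have : v3 ∈ nbrs G s w := (mem_nbrs G).mpr ⟨hv3s, hadj⟩
                rw [h0] at this
                simp at this
              refine mk4 G k hd3 hk4 s a1 a2 v3 w ha1s ha2s hv3s hws h12
                (Ne.symm hv3a1) (hwa a1 ha1) (Ne.symm hv3a2) (hwa a2 ha2) (Ne.symm hwv3) ?_ ?_ ?_
              · have hb0 := ds_sdiff_le G s {a1, a2, v3, w} a2 {v3} ?_
                · have h2 : (nbrs G s a2).card ≤ 3 :=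
                    le_trans (nbrs_card_le_degree G s a2) (hd3 a2)
                  simp only [Finset.card_singleton] at hb0
                  omega
                · intro t ht
                  simp only [Finset.mem_singleton] at ht
                  rw [ht]
                  exact ⟨by simp, hv3s, hva2.symm⟩
              · have hb0 := ds_sdiff_le G s {a1, a2, v3, w} v3 {a1, a2} ?_
                · have h3 : ({a1, a2} : Finset V).card = 2 := by
                    rw [Finset.card_insert_of_notMem (by simp [h12]), Finset.card_singleton]
                  rw [h3] at hb0
                  omega
                · intro t ht
                  simp only [Finset.mem_insert, Finset.mem_singleton] at ht
                  rcases ht with h | h <;> rw [h]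
                  · exact ⟨by simp, ha1s, hva1⟩
                  · exact ⟨by simp, ha2s, hva2⟩
              · refine ds_sdiff_zero G s _ w ?_
                rw [h0]
                exact Finset.empty_subset _
            · obtain ⟨n, hNw⟩ := Finset.card_eq_one.mp h1
              have hnN : n ∈ nbrs G s w := by rw [hNw]; simp
              have hns : n ∈ s := ((mem_nbrs G).mp hnN).1
              have hwn : G.Adj w n := ((mem_nbrs G).mp hnN).2
              have hn2 : (nbrs G s n).card ≤ 2 := hnbr2 n hnN
              have hv3w : v3 ≠ w := by
                intro h
                rw [h] at hv3
                omega
              have hv3n : v3 ≠ n := by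
                intro h
                rw [h] at hv3
                omega
              have hnv3w : ¬ G.Adj v3 w := fun hadj => hA ⟨v3, hv3s, w, hws, hadj, hv3, hw2⟩
              have hnv3n : ¬ G.Adj v3 n := fun hadj => hA ⟨v3, hv3s, n, hns, hadj, hv3, hn2⟩
              have hyne : (nbrs G s v3).Nonempty := by
                rw [← Finset.card_pos, hv3]
                norm_num
              obtain ⟨y, hy⟩ := hyne
              have hys' : y ∈ s := ((mem_nbrs G).mp hy).1
              have hv3y : G.Adj v3 y := ((mem_nbrs G).mp hy).2
              have hyw : y ≠ w := fun h => hnv3w (h ▸ hv3y)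
              have hyn : y ≠ n := fun h => hnv3n (h ▸ hv3y)
              have hnw : n ≠ w := G.ne_of_adj hwn.symm
              refine mk4 G k hd3 hk4 s y v3 n w hys' hv3s hns hws
                (G.ne_of_adj hv3y).symm hyn hyw hv3n hv3w hnw ?_ ?_ ?_
              · have hb0 := ds_sdiff_le G s {y, v3, n, w} v3 {y} ?_
                · simp only [Finset.card_singleton] at hb0
                  omega
                · intro t ht
                  simp only [Finset.mem_singleton] at ht
                  rw [ht]
                  exact ⟨by simp, hys', hv3y⟩
              · have hb0 := ds_sdiff_le G s {y, v3, n, w} n {w} ?_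
                · simp only [Finset.card_singleton] at hb0
                  omega
                · intro t ht
                  simp only [Finset.mem_singleton] at ht
                  rw [ht]
                  exact ⟨by simp, hws, hwn.symm⟩
              · refine ds_sdiff_zero G s _ w ?_
                rw [hNw]
                intro t ht
                simp only [Finset.mem_singleton] at ht
                simp [ht]
            · obtain ⟨n1, n2, hn12, hNw⟩ := Finset.card_eq_two.mp h2cc
              have hn1N : n1 ∈ nbrs G s w := by rw [hNw]; simp
              have hn2N : n2 ∈ nbrs G s w := by rw [hNw]; simp
              have hn1s : n1 ∈ s := ((mem_nbrs G).mp hn1N).1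
              have hn2s : n2 ∈ s := ((mem_nbrs G).mp hn2N).1
              have hwn1 : G.Adj w n1 := ((mem_nbrs G).mp hn1N).2
              have hwn2 : G.Adj w n2 := ((mem_nbrs G).mp hn2N).2
              have hn1w : n1 ≠ w := G.ne_of_adj hwn1.symm
              have hn2w : n2 ≠ w := G.ne_of_adj hwn2.symm
              have h3sub : ({n1, n2, w} : Finset V) ⊆ s := by
                intro t ht
                simp only [Finset.mem_insert, Finset.mem_singleton] at ht
                rcases ht with rfl | rfl | rfl
                exacts [hn1s, hn2s, hws]
              have h3card : ({n1, n2, w} : Finset V).card ≤ 3 := by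
                refine le_trans (Finset.card_insert_le _ _) ?_
                have := Finset.card_insert_le n2 ({w} : Finset V)
                simp only [Finset.card_singleton] at this
                omega
              have hpadsne : (s \ {n1, n2, w}).Nonempty := by
                rw [← Finset.card_pos, Finset.card_sdiff_of_subset h3sub]
                omega
              obtain ⟨p, hp⟩ := hpadsne
              rw [Finset.mem_sdiff] at hp
              have hp1 : p ≠ n1 := fun h => hp.2 (by simp [h])
              have hp2 : p ≠ n2 := fun h => hp.2 (by simp [h])
              have hpw : p ≠ w := fun h => hp.2 (by simp [h])
              refine mk4 G k hd3 hk4 s p n1 n2 w hp.1 hn1s hn2s hws hp1 hp2 hpw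
                hn12 hn1w hn2w ?_ ?_ ?_
              · have hb1 := ds_mono G (Finset.sdiff_subset (s := s) (t := {p, n1, n2, w})) n1
                have hb2 := hnbr2 n1 hn1N
                omega
              · have hb0 := ds_sdiff_le G s {p, n1, n2, w} n2 {w} ?_
                · have hb2 := hnbr2 n2 hn2N
                  simp only [Finset.card_singleton] at hb0
                  omega
                · intro t ht
                  simp only [Finset.mem_singleton] at ht
                  rw [ht]
                  exact ⟨by simp, hws, hwn2.symm⟩
              · refine ds_sdiff_zero G s _ w ?_
                rw [hNw]
                intro t ht
                simp only [Finset.mem_insert, Finset.mem_singleton] at ht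
                rcases ht with rfl | rfl <;> simp
          · right
            push_neg at hC
            refine ⟨hk4, v3, hv3s, a1, ha1s, a2, ha2s, a3, ha3s, hva1, hva2, hva3,
              h12, h13, h23, ?_, ?_, ?_, ?_⟩
            · exact fun hadj => hB ⟨v3, hv3s, a1, ha1s, a2, ha2s, h12, hva1, hva2, hadj⟩
            · exact fun hadj => hB ⟨v3, hv3s, a1, ha1s, a3, ha3s, h13, hva1, hva3, hadj⟩
            · exact fun hadj => hB ⟨v3, hv3s, a2, ha2s, a3, ha3s, h23, hva2, hva3, hadj⟩
            · intro x hx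
              exact le_antisymm (le_trans (nbrs_card_le_degree G s x) (hd3 x)) (hC x hx)

lemma nbrs_sum_comm (P Q : Finset V) :
    ∑ x ∈ P, (nbrs G Q x).card = ∑ y ∈ Q, (nbrs G P y).card := by
  classical
  have hite : ∀ x y : V, (if G.Adj x y then 1 else 0) = (if G.Adj y x then (1:ℕ) else 0) := by
    intro x y
    by_cases h : G.Adj x y
    · rw [if_pos h, if_pos h.symm]
    · rw [if_neg h, if_neg (fun hh => h hh.symm)]
  simp only [nbrs, Finset.card_filter]
  rw [Finset.sum_comm]
  refine Finset.sum_congr rfl ?_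
  intro y _
  refine Finset.sum_congr rfl ?_
  intro x _
  exact hite x y

lemma nbrs_subset_mono (P Q : Finset V) (x : V) (h : P ⊆ Q) : nbrs G P x ⊆ nbrs G Q x := by
  intro t ht
  rw [mem_nbrs] at ht ⊢
  exact ⟨h ht.1, ht.2⟩

lemma nbrs_union_card (P Q : Finset V) (x : V) (hPQ : Disjoint P Q) :
    (nbrs G (P ∪ Q) x).card = (nbrs G P x).card + (nbrs G Q x).card := by
  have h1 : nbrs G (P ∪ Q) x = nbrs G P x ∪ nbrs G Q x := by
    ext t
    simp only [mem_nbrs, Finset.mem_union]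
    tauto
  rw [h1, Finset.card_union_of_disjoint]
  exact Finset.disjoint_left.mpr (fun t ht1 ht2 =>
    (Finset.disjoint_left.mp hPQ) ((mem_nbrs G).mp ht1).1 ((mem_nbrs G).mp ht2).1)

lemma no_sdr {Pa Pb Pc : Finset ℕ} (h2a : 2 ≤ Pa.card) (h2b : 2 ≤ Pb.card) (h2c : 2 ≤ Pc.card)
    (hno : ¬∃ x ∈ Pa, ∃ y ∈ Pb, ∃ z ∈ Pc, x ≠ y ∧ x ≠ z ∧ y ≠ z) :
    ∃ χ1 χ2, χ1 ≠ χ2 ∧ χ1 ∈ Pa ∧ χ1 ∈ Pb ∧ χ1 ∈ Pc ∧ χ2 ∈ Pa ∧ χ2 ∈ Pb ∧ χ2 ∈ Pc := by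
  push_neg at hno
  obtain ⟨χ1, hχ1, χ2, hχ2, h12⟩ := Finset.one_lt_card.mp (by omega : 1 < Pa.card)
  have hstep : ∀ x y, x ∈ Pa → y ∈ Pb → x ≠ y → Pc ⊆ {x, y} := by
    intro x y hx hy hxy t ht
    by_contra hmem
    simp only [Finset.mem_insert, Finset.mem_singleton, not_or] at hmem
    exact hmem.2 (hno x hx y hy t ht hxy (fun h => hmem.1 h.symm)).symm
  obtain ⟨β, hβPb, hβχ1⟩ := Finset.exists_mem_ne (by omega : 1 < Pb.card) χ1
  obtain ⟨β2, hβ2Pb, hβ2χ2⟩ := Finset.exists_mem_ne (by omega : 1 < Pb.card) χ2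
  have hc1 : Pc = {χ1, β} := by
    refine Finset.eq_of_subset_of_card_le (hstep χ1 β hχ1 hβPb (Ne.symm hβχ1)) ?_
    refine le_trans ?_ h2c
    refine le_trans (Finset.card_insert_le _ _) ?_
    simp
  have hc2 : Pc = {χ2, β2} := by
    refine Finset.eq_of_subset_of_card_le (hstep χ2 β2 hχ2 hβ2Pb (Ne.symm hβ2χ2)) ?_
    refine le_trans ?_ h2c
    refine le_trans (Finset.card_insert_le _ _) ?_
    simp
  have hχ2m : χ2 ∈ ({χ1, β} : Finset ℕ) := by
    rw [← hc1, hc2]; simp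
  have hβeq : β = χ2 := by
    rcases Finset.mem_insert.mp hχ2m with h | h
    · exact absurd h.symm h12
    · simp only [Finset.mem_singleton] at h
      exact h.symm
  have hχ1m : χ1 ∈ ({χ2, β2} : Finset ℕ) := by
    rw [← hc2, hc1]; simp
  have hβ2eq : β2 = χ1 := by
    rcases Finset.mem_insert.mp hχ1m with h | h
    · exact absurd h h12
    · simp only [Finset.mem_singleton] at h
      exact h.symm
  refine ⟨χ1, χ2, h12, hχ1, hβ2eq ▸ hβ2Pb, by rw [hc1]; simp, hχ2, hβeq ▸ hβPb, ?_⟩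
  rw [hc1, hβeq]; simp

/-- The hard case: `k = 4`, cubic, with an independent neighbourhood `{a,b,c}` of `v`. -/
lemma hard (hL : ∀ v, (L v).card = 4) (s : Finset V)
    (v a b c : V) (hv : v ∈ s) (ha : a ∈ s) (hb : b ∈ s) (hc : c ∈ s)
    (hva : G.Adj v a) (hvb : G.Adj v b) (hvc : G.Adj v c)
    (hab : a ≠ b) (hac : a ≠ c) (hbc : b ≠ c)
    (hnab : ¬ G.Adj a b) (hnac : ¬ G.Adj a c) (hnbc : ¬ G.Adj b c)
    (hcub : ∀ x ∈ s, (nbrs G s x).card = 3)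
    (m : ℕ) (hm : 1 ≤ m) (hhm : s.card - 4 ≤ 4 * m)
    (hGood : Good G L (s \ {v, a, b, c}) m) :
    Good G L s (m + 1) := by
  classical
  obtain ⟨c₀, hInL, hProp, hBnd⟩ := hGood
  have hva' : v ≠ a := G.ne_of_adj hva
  have hvb' : v ≠ b := G.ne_of_adj hvb
  have hvc' : v ≠ c := G.ne_of_adj hvc
  set Sf : Finset V := {v, a, b, c} with hSf
  set H : Finset V := s \ Sf with hHdef
  have hSfs : Sf ⊆ s := by
    intro x hx
    simp only [hSf, Finset.mem_insert, Finset.mem_singleton] at hx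
    rcases hx with rfl | rfl | rfl | rfl
    exacts [hv, ha, hb, hc]
  have hHs : H ⊆ s := Finset.sdiff_subset
  have hHSf : ∀ x ∈ H, x ∉ Sf := fun x hx => (Finset.mem_sdiff.mp hx).2
  have hvSf : v ∈ Sf := by simp [hSf]
  have haSf : a ∈ Sf := by simp [hSf]
  have hbSf : b ∈ Sf := by simp [hSf]
  have hcSf : c ∈ Sf := by simp [hSf]
  have hcard4 : Sf.card = 4 := by
    rw [hSf, Finset.card_insert_of_notMem (by simp [hva', hvb', hvc']),
        Finset.card_insert_of_notMem (by simp [hab, hac]),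
        Finset.card_insert_of_notMem (by simp [hbc]), Finset.card_singleton]
  have hHcard : H.card = s.card - 4 := by rw [hHdef, Finset.card_sdiff_of_subset hSfs, hcard4]
  have hvnbrs : nbrs G s v = {a, b, c} := by
    have hsub : ({a, b, c} : Finset V) ⊆ nbrs G s v := by
      intro t ht
      simp only [Finset.mem_insert, Finset.mem_singleton] at ht
      rcases ht with rfl | rfl | rfl
      · exact (mem_nbrs G).mpr ⟨ha, hva⟩
      · exact (mem_nbrs G).mpr ⟨hb, hvb⟩
      · exact (mem_nbrs G).mpr ⟨hc, hvc⟩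
    have hc3 : ({a, b, c} : Finset V).card = 3 := by
      rw [Finset.card_insert_of_notMem (by simp [hab, hac]),
          Finset.card_insert_of_notMem (by simp [hbc]), Finset.card_singleton]
    exact (Finset.eq_of_subset_of_card_le hsub (by rw [hcub v hv, hc3])).symm
  have hnadjvH : ∀ x ∈ H, ¬ G.Adj v x := by
    intro x hx hadj
    have hxm : x ∈ nbrs G s v := (mem_nbrs G).mpr ⟨hHs hx, hadj⟩
    rw [hvnbrs] at hxm
    simp only [Finset.mem_insert, Finset.mem_singleton] at hxm
    refine hHSf x hx ?_
    rcases hxm with rfl | rfl | rfl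
    exacts [haSf, hbSf, hcSf]
  -- neighbourhood sizes of a, b, c inside H
  have hABCint : ∀ x, (x = a ∨ x = b ∨ x = c) → (nbrs G s x) ∩ Sf = {v} := by
    intro x hx
    ext t
    simp only [Finset.mem_inter, mem_nbrs, hSf, Finset.mem_insert, Finset.mem_singleton]
    constructor
    · rintro ⟨⟨hts, hadj⟩, ht⟩
      rcases ht with rfl | rfl | rfl | rfl
      · rfl
      all_goals {
        exfalso
        rcases hx with rfl | rfl | rfl <;>
          first
            | exact G.irrefl hadj
            | exact hnab hadj | exact hnac hadj | exact hnbc hadj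
            | exact hnab hadj.symm | exact hnac hadj.symm | exact hnbc hadj.symm }
    · rintro rfl
      refine ⟨⟨hv, ?_⟩, Or.inl rfl⟩
      rcases hx with rfl | rfl | rfl
      exacts [hva.symm, hvb.symm, hvc.symm]
  have hcard2 : ∀ x, (x = a ∨ x = b ∨ x = c) → (nbrs G H x).card = 2 := by
    intro x hx
    have hxs : x ∈ s := by rcases hx with rfl | rfl | rfl; exacts [ha, hb, hc]
    have h1 : nbrs G H x = nbrs G s x \ Sf := by rw [hHdef, nbrs_sdiff]
    have h2 := Finset.card_sdiff_add_card_inter (nbrs G s x) Sf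
    rw [hABCint x hx, Finset.card_singleton, hcub x hxs] at h2
    rw [h1]
    omega
  -- the lists of available colors
  have hPcard : ∀ x, (x = a ∨ x = b ∨ x = c) → 2 ≤ (L x \ (nbrs G H x).image c₀).card := by
    intro x hx
    have h1 := Finset.card_le_card_sdiff_add_card (s := L x) (t := (nbrs G H x).image c₀)
    have h2 : ((nbrs G H x).image c₀).card ≤ 2 := by
      refine le_trans Finset.card_image_le ?_
      rw [hcard2 x hx]
    have h3 := hL x
    omega
  have hpick : ∀ (x : V) (F : Finset ℕ), F.card ≤ 3 → ∃ δ, δ ∈ L x ∧ δ ∉ F := by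
    intro x F hF
    have h1 := Finset.card_le_card_sdiff_add_card (s := L x) (t := F)
    have h2 := hL x
    have h3 : (L x \ F).Nonempty := by
      rw [← Finset.card_pos]; omega
    obtain ⟨δ, hδ⟩ := h3
    rw [Finset.mem_sdiff] at hδ
    exact ⟨δ, hδ.1, hδ.2⟩
  -- count expansion helpers
  have hcnt : ∀ (α : ℕ) (p : V × ℕ) (l : List (V × ℕ)),
      ((p :: l).filter (fun q => q.2 = α)).length =
      (if p.2 = α then 1 else 0) + (l.filter (fun q => q.2 = α)).length := by
    intro α p l
    by_cases h : p.2 = α <;> simp [List.filter_cons, h] <;> omega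
  have hbase : ∀ (fsts : List V) (α : ℕ),
      (H.filter (fun x => x ∉ fsts ∧ c₀ x = α)).card ≤ (H.filter (fun x => c₀ x = α)).card := by
    intro fsts α
    apply Finset.card_le_card
    intro x hx
    rw [Finset.mem_filter] at hx ⊢
    exact ⟨hx.1, hx.2.2⟩
  have hbasee : ∀ (fsts : List V) (α : ℕ) (w : V), w ∈ H → c₀ w = α → w ∈ fsts →
      (H.filter (fun x => x ∉ fsts ∧ c₀ x = α)).card + 1 ≤ (H.filter (fun x => c₀ x = α)).card := by
    intro fsts α w hwH hwα hwf
    have hwmem : w ∈ H.filter (fun x => c₀ x = α) := Finset.mem_filter.mpr ⟨hwH, hwα⟩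
    have hsub : H.filter (fun x => x ∉ fsts ∧ c₀ x = α) ⊆ (H.filter (fun x => c₀ x = α)).erase w := by
      intro x hx
      rw [Finset.mem_filter] at hx
      rw [Finset.mem_erase, Finset.mem_filter]
      exact ⟨fun h => hx.2.1 (h ▸ hwf), hx.1, hx.2.2⟩
    have h1 := Finset.card_le_card hsub
    rw [Finset.card_erase_of_mem hwmem] at h1
    have h2 : 1 ≤ (H.filter (fun x => c₀ x = α)).card := Finset.card_pos.mpr ⟨w, hwmem⟩
    omega
  -- the generic strategy finisher
  have finS : ∀ (qs : List (V × ℕ)) (γa γb γc δ : ℕ),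
      (∀ p ∈ qs, p.1 ∈ H) →
      ((qs.map Prod.fst).Nodup) →
      (∀ p ∈ qs, p.2 ∈ L p.1) →
      (∀ p ∈ qs, ∀ y ∈ H, y ∉ ((v,δ) :: (a,γa) :: (b,γb) :: (c,γc) :: qs).map Prod.fst →
        G.Adj p.1 y → p.2 ≠ c₀ y) →
      (∀ p ∈ qs, ∀ q ∈ qs, p.1 ≠ q.1 → G.Adj p.1 q.1 → p.2 ≠ q.2) →
      (∀ p ∈ qs, p.2 ≠ γa ∧ p.2 ≠ γb ∧ p.2 ≠ γc) →
      γa ∈ L a → γa ∉ (nbrs G H a).image c₀ →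
      γb ∈ L b → γb ∉ (nbrs G H b).image c₀ →
      γc ∈ L c → γc ∉ (nbrs G H c).image c₀ →
      δ ∈ L v → δ ≠ γa → δ ≠ γb → δ ≠ γc →
      (∀ α : ℕ, (H.filter (fun x =>
            x ∉ ((v,δ) :: (a,γa) :: (b,γb) :: (c,γc) :: qs).map Prod.fst ∧ c₀ x = α)).card
          + (((v,δ) :: (a,γa) :: (b,γb) :: (c,γc) :: qs).filter (fun p => p.2 = α)).length
          ≤ m + 1) →
      Good G L s (m + 1) := by
    intro qs γa γb γc δ hqH hqnd hq1 hq2 hq3 hqγ hγa1 hγa2 hγb1 hγb2 hγc1 hγc2 hδL hδa hδb hδc h4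
    have hqSf : ∀ x ∈ qs.map Prod.fst, x ∉ Sf := by
      intro x hx
      obtain ⟨p, hp, rfl⟩ := List.mem_map.mp hx
      exact hHSf p.1 (hqH p hp)
    have hndf : (((v,δ) :: (a,γa) :: (b,γb) :: (c,γc) :: qs).map Prod.fst).Nodup := by
      simp only [List.map_cons, List.nodup_cons]
      refine ⟨?_, ?_, ?_, ?_, hqnd⟩
      · simp only [List.mem_cons, not_or]
        exact ⟨hva', hvb', hvc', fun h => hqSf v h hvSf⟩
      · simp only [List.mem_cons, not_or]
        exact ⟨hab, hac, fun h => hqSf a h haSf⟩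
      · simp only [List.mem_cons, not_or]
        exact ⟨hbc, fun h => hqSf b h hbSf⟩
      · exact fun h => hqSf c h hcSf
    apply finish G L s H c₀ (m + 1) hInL hProp
      ((v,δ) :: (a,γa) :: (b,γb) :: (c,γc) :: qs) hndf hHs
    · intro x hxs hxf
      rw [hHdef, Finset.mem_sdiff]
      refine ⟨hxs, fun hxSf => hxf ?_⟩
      simp only [hSf, Finset.mem_insert, Finset.mem_singleton] at hxSf
      simp only [List.map_cons, List.mem_cons]
      rcases hxSf with rfl | rfl | rfl | rfl
      · exact Or.inl rfl
      · exact Or.inr (Or.inl rfl)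
      · exact Or.inr (Or.inr (Or.inl rfl))
      · exact Or.inr (Or.inr (Or.inr (Or.inl rfl)))
    · intro p hp
      rcases List.mem_cons.mp hp with rfl | hp
      · exact hδL
      rcases List.mem_cons.mp hp with rfl | hp
      · exact hγa1
      rcases List.mem_cons.mp hp with rfl | hp
      · exact hγb1
      rcases List.mem_cons.mp hp with rfl | hp
      · exact hγc1
      · exact hq1 p hp
    · intro p hp y hy hyf hadj heq
      rcases List.mem_cons.mp hp with rfl | hp
      · exact hnadjvH y hy hadj
      rcases List.mem_cons.mp hp with rfl | hp
      · exact hγa2 (Finset.mem_image.mpr ⟨y, (mem_nbrs G).mpr ⟨hy, hadj⟩, heq.symm⟩)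
      rcases List.mem_cons.mp hp with rfl | hp
      · exact hγb2 (Finset.mem_image.mpr ⟨y, (mem_nbrs G).mpr ⟨hy, hadj⟩, heq.symm⟩)
      rcases List.mem_cons.mp hp with rfl | hp
      · exact hγc2 (Finset.mem_image.mpr ⟨y, (mem_nbrs G).mpr ⟨hy, hadj⟩, heq.symm⟩)
      · exact hq2 p hp y hy hyf hadj heq
    · intro p hp q hq hne hadj
      have hqSf' : ∀ r ∈ qs, ¬ G.Adj v r.1 := fun r hr => hnadjvH r.1 (hqH r hr)
      have hqa : ∀ r ∈ qs, G.Adj a r.1 → r.2 ≠ γa := fun r hr _ => (hqγ r hr).1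
      have hqb : ∀ r ∈ qs, G.Adj b r.1 → r.2 ≠ γb := fun r hr _ => (hqγ r hr).2.1
      have hqc : ∀ r ∈ qs, G.Adj c r.1 → r.2 ≠ γc := fun r hr _ => (hqγ r hr).2.2
      rcases List.mem_cons.mp hp with rfl | hp <;>
        [skip; rcases List.mem_cons.mp hp with rfl | hp] <;>
        [skip; skip; rcases List.mem_cons.mp hp with rfl | hp] <;>
        [skip; skip; skip; rcases List.mem_cons.mp hp with rfl | hp]
      all_goals (
        rcases List.mem_cons.mp hq with rfl | hq <;>
          [skip; rcases List.mem_cons.mp hq with rfl | hq] <;>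
          [skip; skip; rcases List.mem_cons.mp hq with rfl | hq] <;>
          [skip; skip; skip; rcases List.mem_cons.mp hq with rfl | hq])
      all_goals first
        | exact absurd rfl hne
        | exact hδa | exact hδb | exact hδc
        | exact Ne.symm hδa | exact Ne.symm hδb | exact Ne.symm hδc
        | exact absurd hadj hnab | exact absurd hadj hnac | exact absurd hadj hnbc
        | exact absurd hadj.symm hnab | exact absurd hadj.symm hnac | exact absurd hadj.symm hnbc
        | exact absurd hadj (hnadjvH _ (hqH _ ‹_›))
        | exact absurd hadj.symm (hnadjvH _ (hqH _ ‹_›))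
        | exact fun h => (hqγ _ ‹_›).1 h.symm
        | exact fun h => (hqγ _ ‹_›).2.1 h.symm
        | exact fun h => (hqγ _ ‹_›).2.2 h.symm
        | exact (hqγ _ ‹_›).1 | exact (hqγ _ ‹_›).2.1 | exact (hqγ _ ‹_›).2.2
        | exact hq3 _ ‹_› _ ‹_› hne hadj
    · exact h4
  -- the three palettes
  by_cases hSDR : ∃ x ∈ L a \ (nbrs G H a).image c₀, ∃ y ∈ L b \ (nbrs G H b).image c₀,
      ∃ z ∈ L c \ (nbrs G H c).image c₀, x ≠ y ∧ x ≠ z ∧ y ≠ z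
  · obtain ⟨χa, hχa, χb, hχb, χc, hχc, hne1, hne2, hne3⟩ := hSDR
    rw [Finset.mem_sdiff] at hχa hχb hχc
    obtain ⟨δ, hδL, hδF⟩ := hpick v {χa, χb, χc} (by
      refine le_trans (Finset.card_insert_le _ _) ?_
      have := Finset.card_insert_le χb ({χc} : Finset ℕ)
      simp only [Finset.card_singleton] at this
      omega)
    have hδa : δ ≠ χa := fun h => hδF (by simp [h])
    have hδb : δ ≠ χb := fun h => hδF (by simp [h])
    have hδc : δ ≠ χc := fun h => hδF (by simp [h])
    refine finS [] χa χb χc δ (by simp) (by simp) (by simp) (by simp) (by simp) (by simp)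
      hχa.1 hχa.2 hχb.1 hχb.2 hχc.1 hχc.2 hδL hδa hδb hδc ?_
    intro α
    have h1 := hbase (((v,δ) :: (a,χa) :: (b,χb) :: (c,χc) :: []).map Prod.fst) α
    have h2 := hBnd α
    have h3 : (((v,δ) :: (a,χa) :: (b,χb) :: (c,χc) :: []).filter (fun p => p.2 = α)).length ≤ 1 := by
      refine count_le_one ?_ α
      simp only [List.map_cons, List.map_nil, List.nodup_cons]
      refine ⟨?_, ?_, ?_, by simp, List.nodup_nil⟩
      · simp only [List.mem_cons, not_or]
        exact ⟨hδa, hδb, hδc, by simp⟩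
      · simp only [List.mem_cons, not_or]
        exact ⟨hne1, hne2, by simp⟩
      · simp only [List.mem_cons, not_or]
        exact ⟨hne3, by simp⟩
    omega
  · obtain ⟨χ1, χ2, h12, hχ1a, hχ1b, hχ1c, hχ2a, hχ2b, hχ2c⟩ :=
      no_sdr (hPcard a (Or.inl rfl)) (hPcard b (Or.inr (Or.inl rfl)))
        (hPcard c (Or.inr (Or.inr rfl))) hSDR
    rw [Finset.mem_sdiff] at hχ1a hχ1b hχ1c hχ2a hχ2b hχ2c
    -- Strategy A : one of the two common colors has slack
    have stratA : ∀ χ χ' : ℕ, χ ≠ χ' →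
        χ ∈ L a → χ ∉ (nbrs G H a).image c₀ →
        χ' ∈ L b → χ' ∉ (nbrs G H b).image c₀ →
        χ ∈ L c → χ ∉ (nbrs G H c).image c₀ →
        (H.filter (fun x => c₀ x = χ)).card + 1 ≤ m →
        Good G L s (m + 1) := by
      intro χ χ' hχχ' hLa hIa hLb hIb hLc hIc hslk
      obtain ⟨δ, hδL, hδF⟩ := hpick v {χ, χ'} (by
        have := Finset.card_insert_le χ ({χ'} : Finset ℕ)
        simp only [Finset.card_singleton] at this
        omega)
      have hδ1 : δ ≠ χ := fun h => hδF (by simp [h])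
      have hδ2 : δ ≠ χ' := fun h => hδF (by simp [h])
      refine finS [] χ χ' χ δ (by simp) (by simp) (by simp) (by simp) (by simp) (by simp)
        hLa hIa hLb hIb hLc hIc hδL hδ1 hδ2 hδ1 ?_
      intro α
      have hb1 := hbase (((v,δ) :: (a,χ) :: (b,χ') :: (c,χ) :: []).map Prod.fst) α
      have hb2 := hBnd α
      rw [hcnt, hcnt, hcnt, hcnt]
      simp only [List.filter_nil, List.length_nil]
      by_cases hα : χ = α
      · have hb3 : (H.filter (fun x => c₀ x = α)).card + 1 ≤ m := by rw [← hα]; exact hslk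
        split_ifs <;> omega
      · split_ifs <;> omega
    -- Strategy H : recolor one vertex of a full common class
    have stratH : ∀ (χ χ' : ℕ) (w : V) (γ : ℕ), χ ≠ χ' → w ∈ H → c₀ w = χ →
        χ ∈ L a → χ ∉ (nbrs G H a).image c₀ →
        χ' ∈ L b → χ' ∉ (nbrs G H b).image c₀ →
        χ ∈ L c → χ ∉ (nbrs G H c).image c₀ →
        γ ∈ L w → γ ∉ (nbrs G H w).image c₀ → γ ≠ χ → γ ≠ χ' →
        Good G L s (m + 1) := by
      intro χ χ' w γ hχχ' hwH hwχ hLa hIa hLb hIb hLc hIc hγL hγI hγ1 hγ2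
      obtain ⟨δ, hδL, hδF⟩ := hpick v {χ, χ', γ} (by
        refine le_trans (Finset.card_insert_le _ _) ?_
        have := Finset.card_insert_le χ' ({γ} : Finset ℕ)
        simp only [Finset.card_singleton] at this
        omega)
      have hδ1 : δ ≠ χ := fun h => hδF (by simp [h])
      have hδ2 : δ ≠ χ' := fun h => hδF (by simp [h])
      have hδ3 : δ ≠ γ := fun h => hδF (by simp [h])
      refine finS [(w, γ)] χ χ' χ δ ?_ (by simp) ?_ ?_ ?_ ?_
        hLa hIa hLb hIb hLc hIc hδL hδ1 hδ2 hδ1 ?_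
      · intro p hp
        simp only [List.mem_singleton] at hp
        rw [hp]
        exact hwH
      · intro p hp
        simp only [List.mem_singleton] at hp
        rw [hp]
        exact hγL
      · intro p hp y hy hyf hadj heq
        simp only [List.mem_singleton] at hp
        rw [hp] at hadj heq
        exact hγI (Finset.mem_image.mpr ⟨y, (mem_nbrs G).mpr ⟨hy, hadj⟩, heq.symm⟩)
      · intro p hp q hq hne hadj
        simp only [List.mem_singleton] at hp hq
        rw [hp, hq] at hne
        exact absurd rfl hne
      · intro p hp
        simp only [List.mem_singleton] at hp
        rw [hp]
        exact ⟨hγ1, hγ2, hγ1⟩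
      · intro α
        have hb1 := hbase (((v,δ) :: (a,χ) :: (b,χ') :: (c,χ) :: [(w,γ)]).map Prod.fst) α
        have hb2 := hBnd α
        rw [hcnt, hcnt, hcnt, hcnt, hcnt]
        simp only [List.filter_nil, List.length_nil]
        by_cases hα : χ = α
        · have hb3 := hbasee (((v,δ) :: (a,χ) :: (b,χ') :: (c,χ) :: [(w,γ)]).map Prod.fst) α w
            hwH (by rw [hwχ, hα]) (by simp)
          split_ifs <;> omega
        · split_ifs <;> omega
    -- Strategy Q : swap a full-class vertex with a uniquely-realized neighbour
    have stratQ : ∀ (χ χ' : ℕ) (w u : V) (γ : ℕ), χ ≠ χ' → w ∈ H → c₀ w = χ →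
        χ ∈ L a → χ ∉ (nbrs G H a).image c₀ →
        χ' ∈ L b → χ' ∉ (nbrs G H b).image c₀ →
        χ ∈ L c → χ ∉ (nbrs G H c).image c₀ →
        u ∈ nbrs G H w → (∀ t ∈ nbrs G H w, t ≠ u → c₀ t ≠ c₀ u) →
        c₀ u ∈ L w → c₀ u ≠ χ1 → c₀ u ≠ χ2 → χ = χ1 ∨ χ = χ2 → χ' = χ1 ∨ χ' = χ2 →
        γ ∈ L u → γ ∉ ((nbrs G H u).erase w).image c₀ → γ ≠ χ1 → γ ≠ χ2 → γ ≠ c₀ u →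
        Good G L s (m + 1) := by
      intro χ χ' w u γ hχχ' hwH hwχ hLa hIa hLb hIb hLc hIc huN huniq hcuL hcu1 hcu2 hχe hχ'e
        hγL hγI hγ1 hγ2 hγcu
      have huH : u ∈ H := ((mem_nbrs G).mp huN).1
      have hwu : G.Adj w u := ((mem_nbrs G).mp huN).2
      have hγχ : γ ≠ χ := by rcases hχe with rfl | rfl; exacts [hγ1, hγ2]
      have hγχ' : γ ≠ χ' := by rcases hχ'e with rfl | rfl; exacts [hγ1, hγ2]
      have hcuχ : c₀ u ≠ χ := by rcases hχe with rfl | rfl; exacts [hcu1, hcu2]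
      have hcuχ' : c₀ u ≠ χ' := by rcases hχ'e with rfl | rfl; exacts [hcu1, hcu2]
      obtain ⟨δ, hδL, hδF⟩ := hpick v {χ, χ', γ} (by
        refine le_trans (Finset.card_insert_le _ _) ?_
        have := Finset.card_insert_le χ' ({γ} : Finset ℕ)
        simp only [Finset.card_singleton] at this
        omega)
      have hδ1 : δ ≠ χ := fun h => hδF (by simp [h])
      have hδ2 : δ ≠ χ' := fun h => hδF (by simp [h])
      have hδ3 : δ ≠ γ := fun h => hδF (by simp [h])
      refine finS [(w, c₀ u), (u, γ)] χ χ' χ δ ?_ ?_ ?_ ?_ ?_ ?_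
        hLa hIa hLb hIb hLc hIc hδL hδ1 hδ2 hδ1 ?_
      · intro p hp
        rcases List.mem_cons.mp hp with rfl | hp
        · exact hwH
        simp only [List.mem_singleton] at hp
        rw [hp]
        exact huH
      · simp only [List.map_cons, List.map_nil, List.nodup_cons]
        exact ⟨by simp [G.ne_of_adj hwu], by simp, List.nodup_nil⟩
      · intro p hp
        rcases List.mem_cons.mp hp with rfl | hp
        · exact hcuL
        simp only [List.mem_singleton] at hp
        rw [hp]
        exact hγL
      · intro p hp y hy hyf hadj heq
        simp only [List.map_cons, List.map_nil, List.mem_cons, List.not_mem_nil, or_false,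
          not_or] at hyf
        rcases List.mem_cons.mp hp with rfl | hp
        · -- p = (w, c₀ u)
          have hyN : y ∈ nbrs G H w := (mem_nbrs G).mpr ⟨hy, hadj⟩
          have hyu : y ≠ u := hyf.2.2.2.2.2
          exact (huniq y hyN hyu) heq.symm
        · simp only [List.mem_singleton] at hp
          rw [hp] at hadj heq
          have hyw : y ≠ w := hyf.2.2.2.2.1
          refine hγI (Finset.mem_image.mpr ⟨y, ?_, heq.symm⟩)
          rw [Finset.mem_erase]
          exact ⟨hyw, (mem_nbrs G).mpr ⟨hy, hadj⟩⟩
      · intro p hp q hq hne hadj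
        rcases List.mem_cons.mp hp with rfl | hp
        · rcases List.mem_cons.mp hq with rfl | hq
          · exact absurd rfl hne
          · simp only [List.mem_singleton] at hq
            rw [hq]
            exact Ne.symm hγcu
        · simp only [List.mem_singleton] at hp
          rcases List.mem_cons.mp hq with rfl | hq
          · rw [hp]
            exact hγcu
          · simp only [List.mem_singleton] at hq
            rw [hp, hq] at hne
            exact absurd rfl hne
      · intro p hp
        rcases List.mem_cons.mp hp with rfl | hp
        · exact ⟨hcuχ, hcuχ', hcuχ⟩
        simp only [List.mem_singleton] at hp
        rw [hp]
        exact ⟨hγχ, hγχ', hγχ⟩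
      · intro α
        have hb1 := hbase (((v,δ) :: (a,χ) :: (b,χ') :: (c,χ) :: [(w, c₀ u), (u, γ)]).map Prod.fst) α
        have hb2 := hBnd α
        rw [hcnt, hcnt, hcnt, hcnt, hcnt, hcnt]
        simp only [List.filter_nil, List.length_nil]
        by_cases hα : χ = α
        · have hb3 := hbasee (((v,δ) :: (a,χ) :: (b,χ') :: (c,χ) :: [(w, c₀ u), (u, γ)]).map Prod.fst)
            α w hwH (by rw [hwχ, hα]) (by simp)
          split_ifs <;> omega
        · by_cases hα2 : c₀ u = α
          · have hb3 := hbasee (((v,δ) :: (a,χ) :: (b,χ') :: (c,χ) :: [(w, c₀ u), (u, γ)]).map Prod.fst)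
              α u huH hα2 (by simp)
            split_ifs <;> omega
          · split_ifs <;> omega
    by_cases hslk1 : (H.filter (fun x => c₀ x = χ1)).card + 1 ≤ m
    · exact stratA χ1 χ2 h12 hχ1a.1 hχ1a.2 hχ2b.1 hχ2b.2 hχ1c.1 hχ1c.2 hslk1
    by_cases hslk2 : (H.filter (fun x => c₀ x = χ2)).card + 1 ≤ m
    · exact stratA χ2 χ1 (Ne.symm h12) hχ2a.1 hχ2a.2 hχ1b.1 hχ1b.2 hχ2c.1 hχ2c.2 hslk2
    by_cases hstH : ∃ w ∈ H, (c₀ w = χ1 ∨ c₀ w = χ2) ∧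
        ∃ γ ∈ L w, γ ∉ (nbrs G H w).image c₀ ∧ γ ≠ χ1 ∧ γ ≠ χ2
    · obtain ⟨w, hwH, hwχ, γ, hγL, hγI, hγ1, hγ2⟩ := hstH
      rcases hwχ with h | h
      · exact stratH χ1 χ2 w γ h12 hwH h hχ1a.1 hχ1a.2 hχ2b.1 hχ2b.2 hχ1c.1 hχ1c.2
          hγL hγI hγ1 hγ2
      · exact stratH χ2 χ1 w γ (Ne.symm h12) hwH h hχ2a.1 hχ2a.2 hχ1b.1 hχ1b.2 hχ2c.1 hχ2c.2
          hγL hγI hγ2 hγ1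
    by_cases hstQ : ∃ w ∈ H, (c₀ w = χ1 ∨ c₀ w = χ2) ∧
        ∃ u ∈ nbrs G H w, (∀ t ∈ nbrs G H w, t ≠ u → c₀ t ≠ c₀ u) ∧
        c₀ u ∈ L w ∧ c₀ u ≠ χ1 ∧ c₀ u ≠ χ2 ∧
        ∃ γ ∈ L u, γ ∉ ((nbrs G H u).erase w).image c₀ ∧ γ ≠ χ1 ∧ γ ≠ χ2 ∧ γ ≠ c₀ u
    · obtain ⟨w, hwH, hwχ, u, huN, huniq, hcuL, hcu1, hcu2, γ, hγL, hγI, hγ1, hγ2, hγcu⟩ := hstQ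
      rcases hwχ with h | h
      · exact stratQ χ1 χ2 w u γ h12 hwH h hχ1a.1 hχ1a.2 hχ2b.1 hχ2b.2 hχ1c.1 hχ1c.2
          huN huniq hcuL hcu1 hcu2 (Or.inl rfl) (Or.inr rfl) hγL hγI hγ1 hγ2 hγcu
      · exact stratQ χ2 χ1 w u γ (Ne.symm h12) hwH h hχ2a.1 hχ2a.2 hχ1b.1 hχ1b.2 hχ2c.1 hχ2c.2
          huN huniq hcuL hcu1 hcu2 (Or.inr rfl) (Or.inl rfl) hγL hγI hγ1 hγ2 hγcu
    · exfalso
      clear finS stratA stratH stratQ hcnt hbase hbasee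
      have hs1 : (H.filter (fun x => c₀ x = χ1)).card = m := le_antisymm (hBnd χ1) (by omega)
      have hs2 : (H.filter (fun x => c₀ x = χ2)).card = m := le_antisymm (hBnd χ2) (by omega)
      set W : Finset V := H.filter (fun x => c₀ x = χ1 ∨ c₀ x = χ2) with hWdef
      set U : Finset V := H \ W with hUdef
      set Fz : Finset V := U.filter (fun u => (nbrs G U u).Nonempty) with hFzdef
      have hWH : W ⊆ H := Finset.filter_subset _ _
      have hUH : U ⊆ H := Finset.sdiff_subset
      have hFzU : Fz ⊆ U := Finset.filter_subset _ _
      have hUW : ∀ u ∈ U, c₀ u ≠ χ1 ∧ c₀ u ≠ χ2 := by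
        intro u hu
        have h1 := (Finset.mem_sdiff.mp hu).2
        rw [hWdef, Finset.mem_filter] at h1
        have h2 := (Finset.mem_sdiff.mp hu).1
        constructor <;> intro h <;> exact h1 ⟨h2, by tauto⟩
      have hWcard : W.card = 2 * m := by
        have hsplit : W = (H.filter (fun x => c₀ x = χ1)) ∪ (H.filter (fun x => c₀ x = χ2)) := by
          ext x
          simp only [hWdef, Finset.mem_filter, Finset.mem_union]
          tauto
        have hdisj : Disjoint (H.filter (fun x => c₀ x = χ1)) (H.filter (fun x => c₀ x = χ2)) := by
          rw [Finset.disjoint_left]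
          intro x hx1 hx2
          rw [Finset.mem_filter] at hx1 hx2
          exact h12 (hx1.2 ▸ hx2.2 ▸ rfl)
        rw [hsplit, Finset.card_union_of_disjoint hdisj, hs1, hs2]
        omega
      have hUcard : U.card + 2 * m = H.card := by
        rw [hUdef, ← hWcard]
        exact Finset.card_sdiff_add_card_eq_card hWH
      have hHWU : H = W ∪ U := by
        rw [hUdef]
        exact (Finset.union_sdiff_of_subset hWH).symm
      have hsHSf : s = H ∪ Sf := by
        rw [hHdef]
        exact (Finset.sdiff_union_of_subset hSfs).symm
      have hdisjWU : Disjoint W U := by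
        rw [hUdef]
        exact Finset.disjoint_sdiff
      have hdisjHSf : Disjoint H Sf := by
        rw [hHdef]
        exact Finset.sdiff_disjoint
      -- W-vertices have no neighbours in Sf
      have hWSf0 : ∀ w ∈ W, (nbrs G Sf w).card = 0 := by
        intro w hwW
        rw [Finset.card_eq_zero, Finset.eq_empty_iff_forall_notMem]
        intro t ht
        rw [mem_nbrs] at ht
        obtain ⟨htSf, hadj⟩ := ht
        have hwH := hWH hwW
        have hwχ := (Finset.mem_filter.mp hwW).2
        simp only [hSf, Finset.mem_insert, Finset.mem_singleton] at htSf
        have himg : ∀ x, (x = a ∨ x = b ∨ x = c) → G.Adj x w →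
            χ1 ∉ (nbrs G H x).image c₀ → χ2 ∉ (nbrs G H x).image c₀ → False := by
          intro x _ hadjx hi1 hi2
          have hwN : w ∈ nbrs G H x := (mem_nbrs G).mpr ⟨hwH, hadjx⟩
          rcases hwχ with h | h
          · exact hi1 (Finset.mem_image.mpr ⟨w, hwN, h⟩)
          · exact hi2 (Finset.mem_image.mpr ⟨w, hwN, h⟩)
        rcases htSf with h | h | h | h <;> rw [h] at hadj
        · exact hnadjvH w hwH hadj.symm
        · exact himg a (Or.inl rfl) hadj.symm hχ1a.2 hχ2a.2
        · exact himg b (Or.inr (Or.inl rfl)) hadj.symm hχ1b.2 hχ2b.2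
        · exact himg c (Or.inr (Or.inr rfl)) hadj.symm hχ1c.2 hχ2c.2
      have hWdeg : ∀ w ∈ W, (nbrs G W w).card + (nbrs G U w).card = 3 := by
        intro w hwW
        have h1 : (nbrs G s w).card = 3 := hcub w (hHs (hWH hwW))
        rw [hsHSf, nbrs_union_card G _ _ _ hdisjHSf, hWSf0 w hwW,
          hHWU, nbrs_union_card G _ _ _ hdisjWU] at h1
        omega
      -- W-freeze
      have hF1 : ∀ w ∈ W, (L w \ ({χ1, χ2} : Finset ℕ)) ⊆ (nbrs G U w).image c₀ := by
        intro w hwW ζ hζ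
        rw [Finset.mem_sdiff] at hζ
        have hζ1 : ζ ≠ χ1 := fun h => hζ.2 (by simp [h])
        have hζ2 : ζ ≠ χ2 := fun h => hζ.2 (by simp [h])
        by_cases hζH : ζ ∈ (nbrs G H w).image c₀
        · obtain ⟨y, hyN, hyζ⟩ := Finset.mem_image.mp hζH
          have hyH := ((mem_nbrs G).mp hyN).1
          have hyU : y ∈ U := by
            rw [hUdef, Finset.mem_sdiff]
            refine ⟨hyH, fun hyW => ?_⟩
            rcases (Finset.mem_filter.mp hyW).2 with h | h
            · exact hζ1 (hyζ ▸ h ▸ rfl)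
            · exact hζ2 (hyζ ▸ h ▸ rfl)
          exact Finset.mem_image.mpr ⟨y, (mem_nbrs G).mpr ⟨hyU, ((mem_nbrs G).mp hyN).2⟩, hyζ⟩
        · exact absurd ⟨w, hWH hwW, (Finset.mem_filter.mp hwW).2, ζ, hζ.1, hζH, hζ1, hζ2⟩ hstH
      have hLw2 : ∀ w : V, 2 ≤ (L w \ ({χ1, χ2} : Finset ℕ)).card := by
        intro w
        have h1 := Finset.card_le_card_sdiff_add_card (s := L w) (t := ({χ1, χ2} : Finset ℕ))
        have h2 : ({χ1, χ2} : Finset ℕ).card ≤ 2 := by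
          have := Finset.card_insert_le χ1 ({χ2} : Finset ℕ)
          simp only [Finset.card_singleton] at this
          omega
        have h3 := hL w
        omega
      have heW : ∀ w ∈ W, 2 ≤ (nbrs G U w).card := by
        intro w hwW
        have h1 := Finset.card_le_card (hF1 w hwW)
        have h2 := Finset.card_image_le (s := nbrs G U w) (f := c₀)
        have h3 := hLw2 w
        omega
      -- the dichotomy
      have hdich : ∀ w ∈ W, 6 ≤ 2 * (nbrs G U w).card + (nbrs G Fz w).card := by
        intro w hwW
        by_cases h3 : 3 ≤ (nbrs G U w).card
        · omega
        · have he2 : (nbrs G U w).card = 2 := le_antisymm (by omega) (heW w hwW)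
          obtain ⟨u1, u2, hu12, hNU⟩ := Finset.card_eq_two.mp he2
          have hu1N : u1 ∈ nbrs G U w := by rw [hNU]; simp
          have hu2N : u2 ∈ nbrs G U w := by rw [hNU]; simp
          have hu1U : u1 ∈ U := ((mem_nbrs G).mp hu1N).1
          have hu2U : u2 ∈ U := ((mem_nbrs G).mp hu2N).1
          have himg : (nbrs G U w).image c₀ = {c₀ u1, c₀ u2} := by
            rw [hNU]
            simp
          have hLsub : (L w \ ({χ1, χ2} : Finset ℕ)) ⊆ {c₀ u1, c₀ u2} := by
            rw [← himg]
            exact hF1 w hwW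
          have hne12 : c₀ u1 ≠ c₀ u2 := by
            intro he
            have h1 := Finset.card_le_card hLsub
            have h2 : ({c₀ u1, c₀ u2} : Finset ℕ).card ≤ 1 := by
              rw [← he]
              simp
            have := hLw2 w
            omega
          have hLeq : (L w \ ({χ1, χ2} : Finset ℕ)) = {c₀ u1, c₀ u2} := by
            refine Finset.eq_of_subset_of_card_le hLsub ?_
            have h1 : ({c₀ u1, c₀ u2} : Finset ℕ).card ≤ 2 := by
              have := Finset.card_insert_le (c₀ u1) ({c₀ u2} : Finset ℕ)
              simp only [Finset.card_singleton] at this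
              omega
            have := hLw2 w
            omega
          -- both u1 u2 are in Fz
          have hinFz : ∀ ui, ui ∈ U → ui ∈ nbrs G U w →
              c₀ ui ∈ (L w \ ({χ1, χ2} : Finset ℕ)) → ui ∈ Fz := by
            intro ui huiU huiN hcuiL
            have huiH : ui ∈ H := hUH huiU
            have huiNH : ui ∈ nbrs G H w := nbrs_subset_mono G U H w hUH huiN
            have hcui1 : c₀ ui ≠ χ1 := (hUW ui huiU).1
            have hcui2 : c₀ ui ≠ χ2 := (hUW ui huiU).2
            have huniq : ∀ t ∈ nbrs G H w, t ≠ ui → c₀ t ≠ c₀ ui := by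
              intro t htN htne he
              have htH := ((mem_nbrs G).mp htN).1
              have htU : t ∈ U := by
                rw [hUdef, Finset.mem_sdiff]
                refine ⟨htH, fun htW => ?_⟩
                rcases (Finset.mem_filter.mp htW).2 with h | h
                · exact hcui1 (he ▸ h)
                · exact hcui2 (he ▸ h)
              have htNU : t ∈ nbrs G U w := (mem_nbrs G).mpr ⟨htU, ((mem_nbrs G).mp htN).2⟩
              rw [hNU] at htNU
              simp only [Finset.mem_insert, Finset.mem_singleton] at htNU
              rcases htNU with rfl | rfl
              · -- t = u1 : then ui = u2 and c₀ u1 = c₀ u2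
                have : ui = u2 := by
                  have := hNU ▸ huiN
                  simp only [Finset.mem_insert, Finset.mem_singleton] at this
                  rcases this with h | h
                  · exact absurd h.symm htne
                  · exact h
                rw [this] at he
                exact hne12 he
              · have : ui = u1 := by
                  have := hNU ▸ huiN
                  simp only [Finset.mem_insert, Finset.mem_singleton] at this
                  rcases this with h | h
                  · exact h
                  · exact absurd h.symm htne
                rw [this] at he
                exact hne12 (he.symm ▸ rfl)
            have hcuiL' : c₀ ui ∈ L w := (Finset.mem_sdiff.mp hcuiL).1
            obtain ⟨ζ, hζL, hζF⟩ := hpick ui {χ1, χ2, c₀ ui} (by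
              refine le_trans (Finset.card_insert_le _ _) ?_
              have := Finset.card_insert_le χ2 ({c₀ ui} : Finset ℕ)
              simp only [Finset.card_singleton] at this
              omega)
            have hζ1 : ζ ≠ χ1 := fun h => hζF (by simp [h])
            have hζ2 : ζ ≠ χ2 := fun h => hζF (by simp [h])
            have hζcu : ζ ≠ c₀ ui := fun h => hζF (by simp [h])
            have hζim : ζ ∈ ((nbrs G H ui).erase w).image c₀ := by
              by_contra hζim
              exact hstQ ⟨w, hWH hwW, (Finset.mem_filter.mp hwW).2, ui, huiNH, huniq,
                hcuiL', hcui1, hcui2, ζ, hζL, hζim, hζ1, hζ2, hζcu⟩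
            obtain ⟨t, htN, htζ⟩ := Finset.mem_image.mp hζim
            rw [Finset.mem_erase] at htN
            have htH := ((mem_nbrs G).mp htN.2).1
            have htU : t ∈ U := by
              rw [hUdef, Finset.mem_sdiff]
              refine ⟨htH, fun htW => ?_⟩
              rcases (Finset.mem_filter.mp htW).2 with h | h
              · exact hζ1 (htζ ▸ h ▸ rfl)
              · exact hζ2 (htζ ▸ h ▸ rfl)
            rw [hFzdef, Finset.mem_filter]
            exact ⟨huiU, ⟨t, (mem_nbrs G).mpr ⟨htU, ((mem_nbrs G).mp htN.2).2⟩⟩⟩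
          have hu1L : c₀ u1 ∈ (L w \ ({χ1, χ2} : Finset ℕ)) := by rw [hLeq]; simp
          have hu2L : c₀ u2 ∈ (L w \ ({χ1, χ2} : Finset ℕ)) := by rw [hLeq]; simp
          have hu1Fz := hinFz u1 hu1U hu1N hu1L
          have hu2Fz := hinFz u2 hu2U hu2N hu2L
          have hsub2 : ({u1, u2} : Finset V) ⊆ nbrs G Fz w := by
            intro t ht
            simp only [Finset.mem_insert, Finset.mem_singleton] at ht
            rcases ht with rfl | rfl
            · exact (mem_nbrs G).mpr ⟨hu1Fz, ((mem_nbrs G).mp hu1N).2⟩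
            · exact (mem_nbrs G).mpr ⟨hu2Fz, ((mem_nbrs G).mp hu2N).2⟩
          have hc2 : ({u1, u2} : Finset V).card = 2 := by
            rw [Finset.card_insert_of_notMem (by simp [hu12]), Finset.card_singleton]
          have := Finset.card_le_card hsub2
          rw [hc2] at this
          omega
      -- sum computations
      have hT1 : ∑ u ∈ U, (nbrs G W u).card = ∑ w ∈ W, (nbrs G U w).card :=
        nbrs_sum_comm G U W
      have hTS : ∑ u ∈ U, (nbrs G Sf u).card = 6 := by
        rw [nbrs_sum_comm G U Sf]
        have hnUv : (nbrs G U v).card = 0 := by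
          rw [Finset.card_eq_zero, Finset.eq_empty_iff_forall_notMem]
          intro t ht
          rw [mem_nbrs] at ht
          exact hnadjvH t (hUH ht.1) ht.2
        have hnUabc : ∀ x, (x = a ∨ x = b ∨ x = c) →
            χ1 ∉ (nbrs G H x).image c₀ → χ2 ∉ (nbrs G H x).image c₀ →
            (nbrs G U x).card = 2 := by
          intro x hx hi1 hi2
          have heq : nbrs G U x = nbrs G H x := by
            apply Finset.Subset.antisymm (nbrs_subset_mono G U H x hUH)
            intro y hy
            have hyH := ((mem_nbrs G).mp hy).1
            have hyU : y ∈ U := by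
              rw [hUdef, Finset.mem_sdiff]
              refine ⟨hyH, fun hyW => ?_⟩
              rcases (Finset.mem_filter.mp hyW).2 with h | h
              · exact hi1 (Finset.mem_image.mpr ⟨y, hy, h⟩)
              · exact hi2 (Finset.mem_image.mpr ⟨y, hy, h⟩)
            exact (mem_nbrs G).mpr ⟨hyU, ((mem_nbrs G).mp hy).2⟩
          rw [heq, hcard2 x hx]
        rw [hSf]
        rw [Finset.sum_insert (by simp [hva', hvb', hvc']),
            Finset.sum_insert (by simp [hab, hac]),
            Finset.sum_insert (by simp [hbc]), Finset.sum_singleton]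
        rw [hnUv, hnUabc a (Or.inl rfl) hχ1a.2 hχ2a.2,
            hnUabc b (Or.inr (Or.inl rfl)) hχ1b.2 hχ2b.2,
            hnUabc c (Or.inr (Or.inr rfl)) hχ1c.2 hχ2c.2]
        norm_num
      have hsplitU : ∀ u ∈ U, (nbrs G W u).card + (nbrs G U u).card + (nbrs G Sf u).card = 3 := by
        intro u huU
        have h1 : (nbrs G s u).card = 3 := hcub u (hHs (hUH huU))
        rw [hsHSf, nbrs_union_card G _ _ _ hdisjHSf, hHWU,
          nbrs_union_card G _ _ _ hdisjWU] at h1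
        omega
      have hsumU : (∑ u ∈ U, (nbrs G W u).card) + (∑ u ∈ U, (nbrs G U u).card) + 6 = 3 * U.card := by
        rw [← hTS, ← Finset.sum_add_distrib, ← Finset.sum_add_distrib]
        rw [Finset.sum_congr rfl hsplitU, Finset.sum_const, smul_eq_mul, mul_comm]
      have hFzW2 : ∀ u ∈ Fz, (nbrs G W u).card ≤ 2 := by
        intro u huFz
        have h1 := hsplitU u (hFzU huFz)
        have h2 : 1 ≤ (nbrs G U u).card :=
          Finset.card_pos.mpr (Finset.mem_filter.mp huFz).2
        omega
      have hT2 : ∑ w ∈ W, (nbrs G Fz w).card ≤ 2 * Fz.card := by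
        rw [nbrs_sum_comm G W Fz]
        calc ∑ u ∈ Fz, (nbrs G W u).card ≤ ∑ u ∈ Fz, 2 := Finset.sum_le_sum hFzW2
          _ = 2 * Fz.card := by rw [Finset.sum_const, smul_eq_mul, mul_comm]
      have hT3 : Fz.card ≤ ∑ u ∈ U, (nbrs G U u).card := by
        calc Fz.card = ∑ u ∈ Fz, 1 := by rw [Finset.sum_const, smul_eq_mul, mul_one]
          _ ≤ ∑ u ∈ Fz, (nbrs G U u).card := by
              refine Finset.sum_le_sum ?_
              intro u huFz
              exact Finset.card_pos.mpr (Finset.mem_filter.mp huFz).2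
          _ ≤ ∑ u ∈ U, (nbrs G U u).card := Finset.sum_le_sum_of_subset hFzU
      have hdsum : 6 * W.card ≤ 2 * (∑ w ∈ W, (nbrs G U w).card) + ∑ w ∈ W, (nbrs G Fz w).card := by
        calc 6 * W.card = ∑ _w ∈ W, 6 := by rw [Finset.sum_const, smul_eq_mul, mul_comm]
          _ ≤ ∑ w ∈ W, (2 * (nbrs G U w).card + (nbrs G Fz w).card) := Finset.sum_le_sum hdich
          _ = 2 * (∑ w ∈ W, (nbrs G U w).card) + ∑ w ∈ W, (nbrs G Fz w).card := by
              rw [Finset.sum_add_distrib, Finset.mul_sum]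
      -- final contradiction
      have hUm : U.card + 2 * m ≤ 4 * m := by
        rw [hUcard, hHcard]
        omega
      omega

lemma main (hL : ∀ v, (L v).card = k) (hk0 : 0 < k) (hdk : ∀ x : V, G.degree x < k)
    (hd3 : ∀ x : V, G.degree x ≤ 3) :
    ∀ (n : ℕ) (s : Finset V), s.card ≤ n → Good G L s ((s.card + k - 1) / k) := by
  intro n
  induction n with
  | zero =>
      intro s hs
      have hse : s = ∅ := Finset.card_eq_zero.mp (Nat.le_zero.mp hs)
      subst hse
      exact ⟨fun _ => 0, by simp, by simp, by simp⟩
  | succ n IH =>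
      intro s hs
      by_cases hsmall : s.card ≤ k
      · rcases Finset.eq_empty_or_nonempty s with rfl | hne
        · exact ⟨fun _ => 0, by simp, by simp, by simp⟩
        · have h1 : Good G L s (0 + 1) := by
            refine greedy G k L hL ∅ (fun _ => 0) 0 (by simp) (by simp) (by simp)
              s.toList s.nodup_toList (by simp) ?_ s (by simp)
            have hball : ∀ x ∈ s.toList, (nbrs G ∅ x).card + 0 + s.toList.length ≤ k := by
              intro x _
              simp only [nbrs, Finset.filter_empty, Finset.card_empty, Finset.length_toList]
              omega
            have := Bounded_append G k (ys := []) hball (Bounded_nil G k)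
            simpa using this
          refine h1.mono G L ?_
          have h2 : 1 ≤ s.card := Finset.card_pos.mpr hne
          rw [Nat.le_div_iff_mul_le hk0]
          omega
      · push_neg at hsmall
        rcases construct G k hdk hd3 s (by omega) with ⟨xs, hnd, hlen, hxss, hbd⟩ |
          ⟨hk4, v, hv, a, ha, b, hbm, c, hcm, hva, hvb, hvc, hab, hac, hbc, hnab, hnac, hnbc, hcub⟩
        · set t := s \ xs.toFinset with ht
          have hsubs : xs.toFinset ⊆ s := by
            intro x hx; exact hxss x (List.mem_toFinset.mp hx)
          have hcardP : xs.toFinset.card = k := by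
            rw [List.toFinset_card_of_nodup hnd, hlen]
          have htcard : t.card = s.card - k := by rw [ht, Finset.card_sdiff_of_subset hsubs, hcardP]
          obtain ⟨c₀, hInL, hProp, hBnd⟩ := IH t (by omega)
          have h2 : Good G L s ((t.card + k - 1) / k + 1) :=
            greedy G k L hL t c₀ _ hInL hProp hBnd xs hnd
              (fun x hx => by rw [ht]; simp [List.mem_toFinset.mpr hx])
              hbd s (by rw [ht, Finset.sdiff_union_of_subset hsubs])
          refine h2.mono G L (le_of_eq ?_)
          rw [htcard]
          have he : s.card + k - 1 = (s.card - k + k - 1) + k := by omega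
          rw [he, Nat.add_div_right _ hk0]
        · subst hk4
          have hva' := G.ne_of_adj hva
          have hvb' := G.ne_of_adj hvb
          have hvc' := G.ne_of_adj hvc
          set H := s \ {v, a, b, c} with hH
          have hsub4 : ({v, a, b, c} : Finset V) ⊆ s := by
            intro x hx
            simp only [Finset.mem_insert, Finset.mem_singleton] at hx
            rcases hx with rfl | rfl | rfl | rfl
            exacts [hv, ha, hbm, hcm]
          have hc4 : ({v, a, b, c} : Finset V).card = 4 := by
            rw [Finset.card_insert_of_notMem (by simp [hva', hvb', hvc']),
                Finset.card_insert_of_notMem (by simp [hab, hac]),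
                Finset.card_insert_of_notMem (by simp [hbc]), Finset.card_singleton]
          have hHcard : H.card = s.card - 4 := by rw [hH, Finset.card_sdiff_of_subset hsub4, hc4]
          obtain hg := IH H (by omega)
          set m := (H.card + 4 - 1) / 4 with hm
          have hmod := Nat.div_add_mod (s.card - 1) 4
          have hmlt : (s.card - 1) % 4 < 4 := Nat.mod_lt _ (by norm_num)
          have hmeq : m = (s.card - 1) / 4 := by
            rw [hm]; congr 1; omega
          have hm1 : 1 ≤ m := by
            rw [hmeq, Nat.le_div_iff_mul_le (by norm_num)]
            omega
          have hhm : s.card - 4 ≤ 4 * m := by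
            rw [hmeq]; omega
          have hfin := hard G L hL s v a b c hv ha hbm hcm hva hvb hvc hab hac hbc
            hnab hnac hnbc hcub m hm1 hhm hg
          refine hfin.mono G L (le_of_eq ?_)
          have he : s.card + 4 - 1 = (s.card - 1) + 4 := by omega
          rw [he, Nat.add_div_right _ (by norm_num), hmeq]

end EqCh

/-- Every finite simple graph `G` with maximum degree `Δ(G) ≤ 3` is equitably
`k`-choosable whenever `k ≥ Δ(G) + 1`: for every `k`-uniform list assignment `L`
there is a proper coloring `c` with `c v ∈ L v` for all `v` in which each color
appears on at most `⌈|V(G)|/k⌉` vertices. -/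
theorem equitably_choosable_of_maxDegree_le_three {V : Type*} [Fintype V] [DecidableEq V]
    (G : SimpleGraph V) [DecidableRel G.Adj] (hΔ : G.maxDegree ≤ 3)
    (k : ℕ) (hk : G.maxDegree + 1 ≤ k)
    (L : V → Finset ℕ) (hL : ∀ v : V, (L v).card = k) :
    ∃ c : V → ℕ,
      (∀ v : V, c v ∈ L v) ∧
      (∀ u v : V, G.Adj u v → c u ≠ c v) ∧
      ∀ α : ℕ,
        (Finset.univ.filter fun v => c v = α).card ≤ (Fintype.card V + k - 1) / k := by
  classical
  have hk0 : 0 < k := by omega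
  have hdk : ∀ x : V, G.degree x < k := fun x => by
    have := G.degree_le_maxDegree x; omega
  have hd3 : ∀ x : V, G.degree x ≤ 3 := fun x => le_trans (G.degree_le_maxDegree x) hΔ
  obtain ⟨c, h1, h2, h3⟩ := EqCh.main G k L hL hk0 hdk hd3 (Finset.univ.card) Finset.univ le_rfl
  refine ⟨c, fun v => h1 v (Finset.mem_univ v), fun u v hadj => h2 u (Finset.mem_univ u) v (Finset.mem_univ v) hadj, fun α => ?_⟩
  have := h3 α
  rwa [Finset.card_univ] at this
end

section
/- For every positive integer n and every integer l with l ≥ 2n+2, the complete bipartite graph K_{2n+1,2n+1} is equitably l-colorable; together with the fact that K_{2n+1,2n+1} is not equitably (2n+1)-colorable, this says that the equitable chromatic threshold of K_{2n+1,2n+1} equals 2n+2. -/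
/-- `G` is equitably `k`-colorable: there is a proper coloring of `G` with `k`
colors in which the sizes of any two color classes differ by at most 1. -/
def EquitablyColorable {V : Type*} [Fintype V] (G : SimpleGraph V) (k : ℕ) : Prop :=
  ∃ c : V → Fin k,
    (∀ u v : V, G.Adj u v → c u ≠ c v) ∧
    ∀ i j : Fin k,
      (Finset.univ.filter fun v => c v = i).card ≤
        (Finset.univ.filter fun v => c v = j).card + 1

set_option linter.unreachableTactic false
set_option linter.unusedTactic false

theorem ec_of_ge (n l : ℕ) (hl : 2 * n + 2 ≤ l) :
    EquitablyColorable (completeBipartiteGraph (Fin (2 * n + 1)) (Fin (2 * n + 1))) l := by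
  classical
  set m := 2 * n + 1 with hm
  set t := 2 * m - l with ht
  set a := min t n with ha
  set b := t - a with hb
  let f : Fin m ⊕ Fin m → ℕ := fun v => match v with
    | Sum.inl i => if i.val < 2 * a then i.val / 2 else i.val - a
    | Sum.inr j => (m - a) + (if j.val < 2 * b then j.val / 2 else j.val - b)
  have hfl : ∀ v, f v < l := by
    rintro (i | j)
    · have := i.isLt
      simp only [f]; split_ifs <;> omega
    · have := j.isLt
      simp only [f]; split_ifs <;> omega
  let c : Fin m ⊕ Fin m → Fin l := fun v => ⟨f v, hfl v⟩
  have hA : ∀ i : Fin m, f (Sum.inl i) < m - a := by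
    intro i; have := i.isLt
    simp only [f]; split_ifs <;> omega
  have hB : ∀ j : Fin m, m - a ≤ f (Sum.inr j) := by
    intro j; simp only [f]; omega
  refine ⟨c, ?_, ?_⟩
  · rintro (i | j) (i' | j') hadj <;> simp at hadj
    · intro h
      have h' : f (Sum.inl i) = f (Sum.inr j') := congrArg Fin.val h
      have := hA i; have := hB j'
      omega
    · intro h
      have h' : f (Sum.inl i') = f (Sum.inr j) := (congrArg Fin.val h).symm
      have := hA i'; have := hB j
      omega
  · -- equitable
    have hcval : ∀ v (k : Fin l), c v = k → f v = k.val := by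
      intro v k h; exact congrArg Fin.val h
    have hcard2 : ∀ k : Fin l, (Finset.univ.filter fun v => c v = k).card ≤ 2 := by
      intro k
      let g : Fin m ⊕ Fin m → ℕ := fun v => match v with
        | Sum.inl i => i.val
        | Sum.inr j => m + j.val
      have hg : Function.Injective g := by
        rintro (i | j) (i' | j') h <;> simp only [g] at h
        · exact congrArg Sum.inl (Fin.ext h)
        · exact absurd h (by have := i.isLt; omega)
        · exact absurd h (by have := i'.isLt; omega)
        · exact congrArg Sum.inr (Fin.ext (by omega))
      set p : ℕ := if k.val < a then 2 * k.val else if k.val < m - a then k.val + a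
        else if k.val < m - a + b then m + 2 * (k.val - (m - a)) else m + (k.val - (m - a - b))
        with hp
      calc (Finset.univ.filter fun v => c v = k).card
          = ((Finset.univ.filter fun v => c v = k).image g).card :=
            (Finset.card_image_of_injective _ hg).symm
        _ ≤ (Finset.Icc p (p + 1)).card := by
            apply Finset.card_le_card
            intro x hx
            rw [Finset.mem_image] at hx
            obtain ⟨v, hv, rfl⟩ := hx
            rw [Finset.mem_filter] at hv
            have hfv := hcval _ _ hv.2
            rw [Finset.mem_Icc]
            rcases v with i | j
            · have := i.isLt
              simp only [f] at hfv
              simp only [g]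
              rw [hp]
              split_ifs at hfv ⊢ <;> omega
            · have := j.isLt
              simp only [f] at hfv
              simp only [g]
              rw [hp]
              split_ifs at hfv ⊢ <;> omega
        _ ≤ 2 := by rw [Nat.card_Icc]; omega
    intro i j
    rcases le_or_gt l (2 * m) with hcase | hcase
    · -- every class is nonempty
      have hpos : 0 < (Finset.univ.filter fun v => c v = j).card := by
        rw [Finset.card_pos]
        have hj := j.isLt
        rcases Nat.lt_or_ge j.val a with h1 | h1
        · refine ⟨Sum.inl ⟨2 * j.val, by omega⟩, ?_⟩
          rw [Finset.mem_filter]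
          refine ⟨Finset.mem_univ _, Fin.ext ?_⟩
          show (if 2 * j.val < 2 * a then (2 * j.val) / 2 else 2 * j.val - a) = j.val
          rw [if_pos (by omega)]; omega
        · rcases Nat.lt_or_ge j.val (m - a) with h2 | h2
          · refine ⟨Sum.inl ⟨j.val + a, by omega⟩, ?_⟩
            rw [Finset.mem_filter]
            refine ⟨Finset.mem_univ _, Fin.ext ?_⟩
            show (if j.val + a < 2 * a then (j.val + a) / 2 else j.val + a - a) = j.val
            rw [if_neg (by omega)]; omega
          · rcases Nat.lt_or_ge j.val (m - a + b) with h3 | h3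
            · refine ⟨Sum.inr ⟨2 * (j.val - (m - a)), by omega⟩, ?_⟩
              rw [Finset.mem_filter]
              refine ⟨Finset.mem_univ _, Fin.ext ?_⟩
              show (m - a) + (if 2 * (j.val - (m - a)) < 2 * b then (2 * (j.val - (m - a))) / 2
                else 2 * (j.val - (m - a)) - b) = j.val
              rw [if_pos (by omega)]; omega
            · refine ⟨Sum.inr ⟨j.val - (m - a - b), by omega⟩, ?_⟩
              rw [Finset.mem_filter]
              refine ⟨Finset.mem_univ _, Fin.ext ?_⟩
              show (m - a) + (if j.val - (m - a - b) < 2 * b then (j.val - (m - a - b)) / 2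
                else j.val - (m - a - b) - b) = j.val
              rw [if_neg (by omega)]; omega
      have := hcard2 i
      omega
    · -- l > 2m : every class has at most one element
      have ha0 : a = 0 := by omega
      have hb0 : b = 0 := by omega
      have h1 : (Finset.univ.filter fun v => c v = i).card ≤ 1 := by
        rw [Finset.card_le_one]
        intro u hu w hw
        rw [Finset.mem_filter] at hu hw
        have hu2 := hcval _ _ hu.2
        have hw2 := hcval _ _ hw.2
        rcases u with x | x <;> rcases w with y | y
        · have hx := x.isLt; have hy := y.isLt
          simp only [f] at hu2 hw2
          split_ifs at hu2 hw2 <;>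
            first
              | (exact congrArg Sum.inl (Fin.ext (by omega)))
              | (exfalso; omega)
        · exact absurd (hu2.trans hw2.symm) (by have := hA x; have := hB y; omega)
        · exact absurd (hu2.trans hw2.symm) (by have := hA y; have := hB x; omega)
        · have hx := x.isLt; have hy := y.isLt
          simp only [f] at hu2 hw2
          split_ifs at hu2 hw2 <;>
            first
              | (exact congrArg Sum.inr (Fin.ext (by omega)))
              | (exfalso; omega)
      omega

theorem not_ec (n : ℕ) :
    ¬ EquitablyColorable (completeBipartiteGraph (Fin (2 * n + 1)) (Fin (2 * n + 1)))
      (2 * n + 1) := by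
  classical
  rintro ⟨c, hprop, heq⟩
  have hsum : ∑ k : Fin (2 * n + 1), (Finset.univ.filter fun v => c v = k).card
      = 2 * (2 * n + 1) := by
    rw [← Finset.card_eq_sum_card_fiberwise (fun v _ => Finset.mem_univ (c v))]
    simp only [Finset.card_univ, Fintype.card_sum, Fintype.card_fin]
    omega
  have hall2 : ∀ k : Fin (2 * n + 1), (Finset.univ.filter fun v => c v = k).card = 2 := by
    intro k
    by_contra hk
    have hcardu : (Finset.univ.erase k).card = 2 * n := by
      rw [Finset.card_erase_of_mem (Finset.mem_univ _), Finset.card_univ, Fintype.card_fin]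
      omega
    have hsplit : (Finset.univ.filter fun v => c v = k).card
        + ∑ j ∈ Finset.univ.erase k, (Finset.univ.filter fun v => c v = j).card
        = 2 * (2 * n + 1) := by
      rw [← hsum, ← Finset.add_sum_erase _ _ (Finset.mem_univ k)]
    rcases Nat.lt_or_ge ((Finset.univ.filter fun v => c v = k).card) 2 with h | h
    · have hub : ∑ j ∈ Finset.univ.erase k, (Finset.univ.filter fun v => c v = j).card
          ≤ (Finset.univ.erase k).card • 2 := by
        apply Finset.sum_le_card_nsmul
        intro j _
        have := heq j k
        omega
      rw [smul_eq_mul] at hub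
      omega
    · have h3 : 3 ≤ (Finset.univ.filter fun v => c v = k).card := by omega
      have hlb : (Finset.univ.erase k).card • 2
          ≤ ∑ j ∈ Finset.univ.erase k, (Finset.univ.filter fun v => c v = j).card := by
        apply Finset.card_nsmul_le_sum
        intro j _
        have := heq k j
        omega
      rw [smul_eq_mul] at hlb
      omega
  have hAcard : (Finset.univ.filter
      fun v : Fin (2 * n + 1) ⊕ Fin (2 * n + 1) => v.isLeft).card = 2 * n + 1 := by
    have : (Finset.univ.filter fun v : Fin (2 * n + 1) ⊕ Fin (2 * n + 1) => v.isLeft)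
        = Finset.univ.image Sum.inl := by
      ext v
      rcases v with i | j <;> simp
    rw [this, Finset.card_image_of_injective _ Sum.inl_injective, Finset.card_univ,
      Fintype.card_fin]
  have hAsum : ∑ k : Fin (2 * n + 1),
      ((Finset.univ.filter fun v : Fin (2 * n + 1) ⊕ Fin (2 * n + 1) => v.isLeft).filter
        fun v => c v = k).card = 2 * n + 1 := by
    rw [← Finset.card_eq_sum_card_fiberwise
      (fun v _ => Finset.mem_univ (c v)), hAcard]
  have heven : ∀ k : Fin (2 * n + 1), 2 ∣
      ((Finset.univ.filter fun v : Fin (2 * n + 1) ⊕ Fin (2 * n + 1) => v.isLeft).filter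
      fun v => c v = k).card := by
    intro k
    by_cases hex : ∃ j : Fin (2 * n + 1), c (Sum.inr j) = k
    · obtain ⟨j, hj⟩ := hex
      have hempty : ((Finset.univ.filter
          fun v : Fin (2 * n + 1) ⊕ Fin (2 * n + 1) => v.isLeft).filter
          fun v => c v = k) = ∅ := by
        rw [Finset.eq_empty_iff_forall_notMem]
        rintro (i | i) hv <;> rw [Finset.mem_filter, Finset.mem_filter] at hv
        · exact hprop (Sum.inl i) (Sum.inr j) (by simp) (hv.2.trans hj.symm)
        · simpa using hv.1.2
      rw [hempty]
      simp
    · have hfull : ((Finset.univ.filter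
          fun v : Fin (2 * n + 1) ⊕ Fin (2 * n + 1) => v.isLeft).filter
          fun v => c v = k) = Finset.univ.filter fun v => c v = k := by
        ext v
        rcases v with i | i
        · simp
        · simp only [Finset.mem_filter, Finset.mem_univ, true_and]
          constructor
          · rintro ⟨h1, h2⟩; exact h2
          · intro h; exact absurd ⟨i, h⟩ hex
      rw [hfull, hall2 k]
  have : 2 ∣ 2 * n + 1 := by
    rw [← hAsum]
    exact Finset.dvd_sum fun k _ => heven k
  omega

/-- For every positive integer `n`, the complete bipartite graph `K_{2n+1,2n+1}` is
equitably `l`-colorable for every `l ≥ 2n+2`; together with the fact that it is not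
equitably `(2n+1)`-colorable, this says that its equitable chromatic threshold
equals `2n+2`. -/
theorem equitableChromaticThreshold_completeBipartite (n : ℕ) (hn : 0 < n) :
    (∀ l : ℕ, 2 * n + 2 ≤ l →
      EquitablyColorable (completeBipartiteGraph (Fin (2 * n + 1)) (Fin (2 * n + 1))) l) ∧
    IsLeast {k : ℕ | ∀ l : ℕ, k ≤ l →
      EquitablyColorable (completeBipartiteGraph (Fin (2 * n + 1)) (Fin (2 * n + 1))) l}
      (2 * n + 2) := by
  refine ⟨fun l hl => ec_of_ge n l hl, ⟨fun l hl => ec_of_ge n l hl, ?_⟩⟩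
  intro k hk
  by_contra h
  exact not_ec n (hk (2 * n + 1) (by omega))
end
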